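/- arXiv:2009.04900 — 3 statements merged into one kernel-verified Lean document; each statement's English description precedes it below -/
import Mathlib

section
/- Let P_{S2}(x) = 1 + Σ_{n≥1} |L_{S2}(n)| xⁿ be the formal power series in x over ℚ counting the paths in L_{S2}(n). Then 8x·P_{S2}(x) = 1 + 3x − √(1 − 10x + 9x²), where the square root denotes the unique formal power series with constant term 1 whose square is 1 − 10x + 9x². -/
/-- A lattice path from `(0,0)` to `(2n,0)` with steps in `S` that never goes
below the x-axis, encoded as the list of its steps. -/
def IsPath (S : Set (ℤ × ℤ)) (n : ℕ) (p : List (ℤ × ℤ)) : Prop :=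
  (∀ s ∈ p, s ∈ S) ∧
  (p.map Prod.fst).sum = 2 * n ∧
  (p.map Prod.snd).sum = 0 ∧
  ∀ q : List (ℤ × ℤ), q <+: p → 0 ≤ (q.map Prod.snd).sum

def S1 : Set (ℤ × ℤ) := {(1, 1), (1, -1)}
def S2 : Set (ℤ × ℤ) := {s | ∃ r : ℤ, 0 < r ∧ (s = (r, r) ∨ s = (r, -r))}
def S3 : Set (ℤ × ℤ) := {(1, 1), (1, -1), (2, 0)}
def S4 : Set (ℤ × ℤ) := {s | ∃ r : ℤ, 0 < r ∧ (s = (r, r) ∨ s = (r, -r) ∨ s = (2 * r, 0))}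
def S5 : Set (ℤ × ℤ) := {s | s = (1, 1) ∨ s = (1, -1) ∨ ∃ r : ℤ, 0 < r ∧ s = (2 * r, 0)}
def S6 : Set (ℤ × ℤ) := {s | (∃ r : ℤ, 0 < r ∧ (s = (r, r) ∨ s = (r, -r))) ∨ s = (2, 0)}

/-- Number of runs: vertices lying between two consecutive steps of the same kind. -/
def runs (p : List (ℤ × ℤ)) : ℕ :=
  (p.zip p.tail).countP (fun q => q.1 == q.2)

/-- Number of diagonal runs: vertices between two consecutive equal non-horizontal steps. -/
def dr (p : List (ℤ × ℤ)) : ℕ :=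
  (p.zip p.tail).countP (fun q => q.1 == q.2 && q.1.2 != 0)

/-- Number of horizontal runs: vertices between two consecutive horizontal steps. -/
def hr (p : List (ℤ × ℤ)) : ℕ :=
  (p.zip p.tail).countP (fun q => q.1 == q.2 && q.1.2 == 0)

/-- The path has no horizontal step lying on the x-axis. -/
def NoFlatOnAxis (p : List (ℤ × ℤ)) : Prop :=
  ∀ q s, q ++ [s] <+: p → s.2 = 0 → (q.map Prod.snd).sum ≠ 0

namespace KM

abbrev Stp := ℤ × ℤ

def ss (p : List Stp) : ℤ := (p.map Prod.snd).sum
def fs (p : List Stp) : ℤ := (p.map Prod.fst).sum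

@[simp] lemma ss_nil : ss [] = 0 := rfl
@[simp] lemma fs_nil : fs [] = 0 := rfl
@[simp] lemma ss_cons (a : Stp) (p : List Stp) : ss (a :: p) = a.2 + ss p := by
  simp [ss]
@[simp] lemma fs_cons (a : Stp) (p : List Stp) : fs (a :: p) = a.1 + fs p := by
  simp [fs]
@[simp] lemma ss_append (p q : List Stp) : ss (p ++ q) = ss p + ss q := by
  simp [ss]
@[simp] lemma fs_append (p q : List Stp) : fs (p ++ q) = fs p + fs q := by
  simp [fs]
@[simp] lemma ss_singleton (a : Stp) : ss [a] = a.2 := by simp [ss]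
@[simp] lemma fs_singleton (a : Stp) : fs [a] = a.1 := by simp [fs]

lemma isPath_iff (n : ℕ) (p : List Stp) :
    IsPath S2 n p ↔ (∀ s ∈ p, s ∈ S2) ∧ fs p = 2 * n ∧ ss p = 0 ∧
      ∀ k : ℕ, 0 ≤ ss (p.take k) := by
  constructor
  · rintro ⟨h1, h2, h3, h4⟩
    exact ⟨h1, h2, h3, fun k => h4 _ (List.take_prefix k p)⟩
  · rintro ⟨h1, h2, h3, h4⟩
    refine ⟨h1, h2, h3, fun q hq => ?_⟩
    rw [List.prefix_iff_eq_take.mp hq]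
    exact h4 _

lemma step_fst (s : Stp) (h : s ∈ S2) : 1 ≤ s.1 := by
  obtain ⟨r, hr, h | h⟩ := h <;> subst h <;> simp <;> omega

lemma step_snd (s : Stp) (h : s ∈ S2) : s.2 = s.1 ∨ s.2 = -s.1 := by
  obtain ⟨r, hr, h | h⟩ := h <;> subst h <;> simp

lemma step_snd_ne (s : Stp) (h : s ∈ S2) : s.2 ≠ 0 := by
  have h1 := step_fst s h
  rcases step_snd s h with h2 | h2 <;> omega

lemma up_mem (r : ℤ) (hr : 1 ≤ r) : ((r, r) : Stp) ∈ S2 := ⟨r, by omega, Or.inl rfl⟩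
lemma down_mem (r : ℤ) (hr : 1 ≤ r) : ((r, -r) : Stp) ∈ S2 := ⟨r, by omega, Or.inr rfl⟩

lemma fs_nonneg (p : List Stp) (h : ∀ s ∈ p, s ∈ S2) : 0 ≤ fs p := by
  induction p with
  | nil => simp
  | cons a t ih =>
    have := step_fst a (h a (by simp))
    have := ih (fun s hs => h s (by simp [hs]))
    simp; omega

lemma length_le_fs (p : List Stp) (h : ∀ s ∈ p, s ∈ S2) : (p.length : ℤ) ≤ fs p := by
  induction p with
  | nil => simp
  | cons a t ih =>
    have := step_fst a (h a (by simp))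
    have := ih (fun s hs => h s (by simp [hs]))
    simp; push_cast; omega

lemma fs_even (p : List Stp) (h : ∀ s ∈ p, s ∈ S2) : (2 : ℤ) ∣ (fs p - ss p) := by
  induction p with
  | nil => simp
  | cons a t ih =>
    have ha := step_snd a (h a (by simp))
    have ht := ih (fun s hs => h s (by simp [hs]))
    simp only [fs_cons, ss_cons]
    have : a.1 + fs t - (a.2 + ss t) = (a.1 - a.2) + (fs t - ss t) := by ring
    rw [this]
    rcases ha with h2 | h2
    · rw [h2]; simpa using ht
    · obtain ⟨c, hc⟩ := ht
      exact ⟨a.1 + c, by omega⟩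

lemma exists_semilength (p : List Stp) (h : ∀ s ∈ p, s ∈ S2) (h0 : ss p = 0) :
    ∃ c : ℕ, fs p = 2 * c := by
  have h1 := fs_even p h
  rw [h0, sub_zero] at h1
  have h2 := fs_nonneg p h
  obtain ⟨c, hc⟩ := h1
  have hc0 : 0 ≤ c := by omega
  exact ⟨c.toNat, by omega⟩

end KM

namespace KM

lemma finite_bounded_lists (K : Set Stp) (hK : K.Finite) (N : ℕ) :
    {l : List Stp | l.length ≤ N ∧ ∀ x ∈ l, x ∈ K}.Finite := by
  induction N with
  | zero =>
    apply Set.Finite.subset (Set.finite_singleton ([] : List Stp))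
    rintro l ⟨hl, -⟩
    simp only [Nat.le_zero, List.length_eq_zero_iff] at hl
    simp [hl]
  | succ N ih =>
    apply Set.Finite.subset ((Set.Finite.image2 List.cons hK ih).insert [])
    rintro l ⟨hl, hmem⟩
    cases l with
    | nil => simp
    | cons a t =>
      right
      exact ⟨a, hmem a (by simp), t,
        ⟨by simpa using hl, fun x hx => hmem x (by simp [hx])⟩, rfl⟩

lemma finite_paths (n : ℕ) : {p : List Stp | IsPath S2 n p}.Finite := by
  apply Set.Finite.subset
    (finite_bounded_lists (Set.Icc ((1 : ℤ), (-(2 * n) : ℤ)) ((2 * n : ℤ), (2 * n : ℤ)))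
      (Set.finite_Icc _ _) (2 * n))
  intro p hp
  rw [Set.mem_setOf_eq, isPath_iff] at hp
  obtain ⟨h1, h2, h3, h4⟩ := hp
  constructor
  · have := length_le_fs p h1
    omega
  · intro x hx
    have hx2 := h1 x hx
    have hf := step_fst x hx2
    have hs := step_snd x hx2
    have hle : x.1 ≤ fs p := by
      have : ∀ y ∈ p.map Prod.fst, (0:ℤ) ≤ y := by
        intro y hy
        obtain ⟨z, hz, rfl⟩ := List.mem_map.mp hy
        exact le_of_lt (step_fst z (h1 z hz))
      exact List.single_le_sum this _ (List.mem_map_of_mem (f := Prod.fst) hx)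
    rw [h2] at hle
    constructor <;> constructor <;> simp <;> omega

instance finite_A (n : ℕ) : Finite {p : List Stp // IsPath S2 n p} :=
  (finite_paths n).to_subtype

lemma isPath_nil : IsPath S2 0 [] := by
  rw [isPath_iff]; simp

lemma isPath_zero (p : List Stp) (h : IsPath S2 0 p) : p = [] := by
  rw [isPath_iff] at h
  obtain ⟨h1, h2, -, -⟩ := h
  have := length_le_fs p h1
  rw [h2] at this
  simpa using List.length_eq_zero_iff.mp (by omega)

lemma card_A_zero : Nat.card {p : List Stp // IsPath S2 0 p} = 1 := by
  rw [Nat.card_eq_one_iff_unique]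
  exact ⟨⟨fun a b => Subtype.ext (by rw [isPath_zero _ a.2, isPath_zero _ b.2])⟩,
    ⟨⟨[], isPath_nil⟩⟩⟩

lemma size_unique {k k' : ℕ} {p : List Stp} (h : IsPath S2 k p) (h' : IsPath S2 k' p) :
    k = k' := by
  rw [isPath_iff] at h h'
  omega

lemma isPath_ne_nil {n : ℕ} {p : List Stp} (h : IsPath S2 (n + 1) p) : p ≠ [] := by
  intro hp
  subst hp
  rw [isPath_iff] at h
  simp at h
  omega

/-- head of a nonempty path is an up step -/
lemma head_shape {k : ℕ} {p : List Stp} (h : IsPath S2 k p) (hne : p ≠ []) :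
    ∃ (r : ℤ) (t : List Stp), 1 ≤ r ∧ p = (r, r) :: t := by
  rw [isPath_iff] at h
  obtain ⟨h1, -, -, h4⟩ := h
  cases p with
  | nil => exact absurd rfl hne
  | cons a t =>
    have ha := h1 a (by simp)
    have hf := step_fst a ha
    have hs := step_snd a ha
    have h1' := h4 1
    simp [List.take_succ_cons] at h1'
    have ha2 : a.2 = a.1 := by omega
    refine ⟨a.1, t, hf, ?_⟩
    have : a = (a.1, a.2) := rfl
    rw [this, ha2]

/-- last step of a nonempty path is a down step, and the rest sums to its value -/
lemma last_shape {k : ℕ} {p : List Stp} (h : IsPath S2 k p) (hne : p ≠ []) :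
    ∃ (u : ℤ) (t : List Stp), 1 ≤ u ∧ p = t ++ [(u, -u)] ∧ ss t = u := by
  rw [isPath_iff] at h
  obtain ⟨h1, -, h3, h4⟩ := h
  rcases List.eq_nil_or_concat p with rfl | ⟨t, x, rfl⟩
  · exact absurd rfl hne
  · rw [List.concat_eq_append] at *
    have hx := h1 x (by simp)
    have hf := step_fst x hx
    have hs := step_snd x hx
    have hss : ss t + x.2 = 0 := by simpa using h3
    have ht : 0 ≤ ss t := by
      have := h4 t.length
      rwa [List.take_append_of_le_length (le_refl _), List.take_length] at this
  
    have hx2 : x.2 = -x.1 := by omega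
    refine ⟨x.1, t, hf, ?_, by omega⟩
    have : x = (x.1, x.2) := rfl
    rw [this, hx2]

end KM

namespace KM

@[simp] lemma ss_take_single (x : Stp) (u : ℕ) :
    ss ([x].take u) = if u = 0 then 0 else x.2 := by
  cases u <;> simp

lemma ss_take_phiform (i j : ℤ) (m q : List Stp) (t : ℕ) :
    ss (((i, i) :: (m ++ [(j, -j)] ++ q)).take t) =
      if t = 0 then 0
      else if t ≤ m.length + 1 then i + ss (m.take (t - 1))
      else i + ss m - j + ss (q.take (t - m.length - 2)) := by
  cases t with
  | zero => simp
  | succ t =>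
    rw [List.take_succ_cons, List.take_append,
      List.take_append]
    simp only [ss_cons, ss_append, ss_take_single, List.length_append,
      List.length_singleton, Nat.succ_sub_one]
    rw [if_neg (Nat.succ_ne_zero t)]
    rcases le_or_gt t m.length with h | h
    · rw [if_pos (by omega), if_pos (by omega)]
      have h2 : t - (m.length + 1) = 0 := by omega
      rw [h2]
      simp
    · rw [if_neg (by omega), if_neg (by omega)]
      rw [List.take_of_length_le (by omega)]
      have h2 : t - (m.length + 1) = t + 1 - m.length - 2 := by omega
      rw [h2]
      ring

lemma mid_isPath {i j : ℤ} {m q : List Stp} {c k₂ : ℕ}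
    (hi : 1 ≤ i) (hj : 1 ≤ j) (hm : ∀ s ∈ m, s ∈ S2) (hss : ss m = j - i)
    (hmid : ∀ t : ℕ, 1 ≤ i + ss (m.take t))
    (hfs : i + fs m + j = 2 * c) (hq : IsPath S2 k₂ q) :
    IsPath S2 (c + k₂) ((i, i) :: (m ++ [(j, -j)] ++ q)) := by
  rw [isPath_iff] at hq ⊢
  obtain ⟨hq1, hq2, hq3, hq4⟩ := hq
  refine ⟨?_, ?_, ?_, ?_⟩
  · intro s hs
    rcases List.mem_cons.mp hs with rfl | hs
    · exact up_mem i hi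
    rcases List.mem_append.mp hs with hs | hs
    · rcases List.mem_append.mp hs with hs | hs
      · exact hm s hs
      · rw [List.mem_singleton] at hs
        subst hs; exact down_mem j hj
    · exact hq1 s hs
  · simp only [fs_cons, fs_append, fs_singleton, fs_nil]
    push_cast
    omega
  · simp only [ss_cons, ss_append, ss_singleton, ss_nil]
    omega
  · intro t
    rw [ss_take_phiform]
    split_ifs with h1 h2
    · exact le_refl 0
    · linarith [hmid (t - 1)]
    · have := hq4 (t - m.length - 2)
      omega

lemma mid_isPath₂ {i j : ℤ} {m : List Stp} {c : ℕ} (hi : 1 ≤ i) (hj : 1 ≤ j)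
    (hm : ∀ s ∈ m, s ∈ S2) (hss : ss m = j - i)
    (hmid : ∀ t : ℕ, 1 ≤ i + ss (m.take t))
    (hfs : i + fs m + j = 2 * c) (hc : 1 ≤ c) :
    IsPath S2 (c - 1)
      ((if 2 ≤ i then [(i-1, i-1)] else []) ++ m ++
        (if 2 ≤ j then [(j-1, -(j-1))] else [])) := by
  have h2c : ((c - 1 : ℕ) : ℤ) = (c : ℤ) - 1 := by push_cast [hc]; ring
  rw [isPath_iff]
  refine ⟨?_, ?_, ?_, ?_⟩
  · intro s hs
    rcases List.mem_append.mp hs with hs | hs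
    · rcases List.mem_append.mp hs with hs | hs
      · split_ifs at hs with h
        · rw [List.mem_singleton] at hs
          subst hs; exact up_mem _ (by omega)
        · simp at hs
      · exact hm s hs
    · split_ifs at hs with h
      · rw [List.mem_singleton] at hs
        subst hs; exact down_mem _ (by omega)
      · simp at hs
  · simp only [fs_append]
    split_ifs with h h' h' <;>
      simp only [fs_singleton, fs_nil, fs_cons] <;> omega
  · simp only [ss_append]
    split_ifs with h h' h' <;>
      simp only [ss_singleton, ss_nil, ss_cons] <;> omega
  · intro t
    rw [List.take_append, List.take_append]
    simp only [ss_append]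
    split_ifs with h1 h2 h2
    · -- front = [(i-1,i-1)], back = [(j-1,-(j-1))]
      simp only [ss_take_single, List.length_singleton, List.length_append]
      rcases Nat.eq_zero_or_pos t with rfl | ht
      · simp
      rw [if_neg (by omega)]
      rcases Nat.eq_zero_or_pos (t - (1 + m.length)) with he | he
      · rw [if_pos he]
        have := hmid (t - 1)
        omega
      · rw [if_neg (by omega), List.take_of_length_le (by omega)]
        omega
    · -- front = [(i-1,i-1)], back = []
      simp only [ss_take_single, List.take_nil, ss_nil, List.length_singleton]
      rcases Nat.eq_zero_or_pos t with rfl | ht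
      · simp
      rw [if_neg (by omega)]
      have := hmid (t - 1)
      omega
    · -- front = [], back = [(j-1,-(j-1))]
      simp only [ss_take_single, List.take_nil, ss_nil, List.nil_append,
        List.length_nil, Nat.sub_zero, zero_add]
      rcases Nat.eq_zero_or_pos (t - m.length) with he | he
      · rw [if_pos he]
        have := hmid t
        omega
      · rw [if_neg (by omega), List.take_of_length_le (by omega)]
        omega
    · -- front = [], back = []
      simp only [ss_take_single, List.take_nil, ss_nil, List.nil_append,
        List.length_nil, Nat.sub_zero, zero_add, add_zero]
      have := hmid t
      omega
end KM

namespace KM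

def phi (b₁ b₂ : Bool) (p₁ q : List Stp) : List Stp :=
  let i : ℤ := if b₁ then p₁.headI.1 + 1 else 1
  let m₀ : List Stp := if b₁ then p₁.tail else p₁
  let j : ℤ := if b₂ then (m₀.getLastD (0, 0)).1 + 1 else 1
  let m : List Stp := if b₂ then m₀.dropLast else m₀
  (i, i) :: (m ++ [(j, -j)] ++ q)

lemma phi_spec {k₁ : ℕ} {p₁ : List Stp} (b₁ b₂ : Bool) (q : List Stp)
    (h : IsPath S2 k₁ p₁) (hne : (b₁ || b₂) = true → p₁ ≠ []) :
    ∃ (i j : ℤ) (m : List Stp),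
      phi b₁ b₂ p₁ q = (i, i) :: (m ++ [(j, -j)] ++ q) ∧
      1 ≤ i ∧ 1 ≤ j ∧ (b₁ = true ↔ 2 ≤ i) ∧ (b₂ = true ↔ 2 ≤ j) ∧
      (∀ s ∈ m, s ∈ S2) ∧ ss m = j - i ∧ (∀ t, 1 ≤ i + ss (m.take t)) ∧
      i + fs m + j = 2 * ((k₁ : ℤ) + 1) ∧
      p₁ = (if 2 ≤ i then [(i-1, i-1)] else []) ++ m ++
        (if 2 ≤ j then [(j-1, -(j-1))] else []) := by
  obtain ⟨h1, h2, h3, h4⟩ := (isPath_iff _ _).mp h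
  cases b₁ <;> cases b₂
  · -- false false
    refine ⟨1, 1, p₁, by simp [phi], le_refl _, le_refl _, by simp, by simp, h1,
      by omega, ?_, by push_cast; omega, by norm_num⟩
    intro t
    have := h4 t
    omega
  · -- false true
    have hne' : p₁ ≠ [] := hne (by simp)
    obtain ⟨u, t0, hu, hp₁, hsst0⟩ := last_shape h hne'
    subst hp₁
    simp only [ss_append, ss_singleton] at h3
    simp only [fs_append, fs_singleton] at h2
    refine ⟨1, u + 1, t0, ?_, le_refl _, by omega, by simp, by simp; omega,
      fun s hs => h1 s (by simp [hs]), by simp at h3 ⊢; omega, ?_, ?_, ?_⟩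
    · simp [phi, List.getLastD_concat, List.dropLast_concat]
    · intro t
      rcases le_or_gt t t0.length with ht | ht
      · have := h4 t
        rw [List.take_append_of_le_length ht] at this
        omega
      · rw [List.take_of_length_le (by omega)]
        omega
    · (try simp at h2); push_cast; omega
    · rw [if_neg (by omega), if_pos (by omega)]
      simp [add_sub_cancel_right]
  · -- true false
    have hne' : p₁ ≠ [] := hne (by simp)
    obtain ⟨r, t0, hr, hp₁⟩ := head_shape h hne'
    subst hp₁
    simp only [ss_cons] at h3
    simp only [fs_cons] at h2
    refine ⟨r + 1, 1, t0, ?_, by omega, le_refl _, by simp; omega, by simp,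
      fun s hs => h1 s (by simp [hs]), by simp at h3 ⊢; omega, ?_, ?_, ?_⟩
    · simp [phi]
    · intro t
      have := h4 (t + 1)
      rw [List.take_succ_cons] at this
      simp only [ss_cons] at this
      try simp at this
      omega
    · (try simp at h2); push_cast; omega
    · rw [if_pos (by omega), if_neg (by omega)]
      simp [add_sub_cancel_right]
  · -- true true
    have hne' : p₁ ≠ [] := hne (by simp)
    obtain ⟨u, t', hu, hp₁, hsst'⟩ := last_shape h hne'
    have ht'ne : t' ≠ [] := by
      rintro rfl
      simp at hsst'
      omega
    obtain ⟨hd, mid, rfl⟩ := List.exists_cons_of_ne_nil ht'ne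
    obtain ⟨r, tB, hr, hBhead⟩ := head_shape h hne'
    rw [hp₁, List.cons_append] at hBhead
    injection hBhead with h5 h6
    subst h5
    subst hp₁
    simp only [List.cons_append, ss_cons, ss_append, ss_singleton] at h3
    simp only [List.cons_append, fs_cons, fs_append, fs_singleton] at h2
    refine ⟨r + 1, u + 1, mid, ?_, by omega, by omega, by simp; omega, by simp; omega,
      fun s hs => h1 s (by simp [hs]), by simp at h3 ⊢; omega, ?_, ?_, ?_⟩
    · simp [phi, List.getLastD_concat, List.dropLast_concat]
    · intro t
      rcases le_or_gt t mid.length with ht | ht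
      · have := h4 (t + 1)
        rw [List.cons_append, List.take_succ_cons,
          List.take_append_of_le_length ht] at this
        simp only [ss_cons] at this
        try simp at this
        omega
      · rw [List.take_of_length_le (by omega)]
        simp at h3
        omega
    · (try simp at h2); push_cast; omega
    · rw [if_pos (by omega), if_pos (by omega)]
      simp [add_sub_cancel_right]

lemma phi_isPath {k₁ k₂ : ℕ} {p₁ q : List Stp} (b₁ b₂ : Bool)
    (h₁ : IsPath S2 k₁ p₁) (h₂ : IsPath S2 k₂ q)
    (hne : (b₁ || b₂) = true → p₁ ≠ []) :
    IsPath S2 (k₁ + 1 + k₂) (phi b₁ b₂ p₁ q) := by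
  obtain ⟨i, j, m, heq, hi, hj, -, -, hm, hss, hmid, hfs, -⟩ := phi_spec b₁ b₂ q h₁ hne
  rw [heq]
  have : (i : ℤ) + fs m + j = 2 * ((k₁ + 1 : ℕ) : ℤ) := by push_cast; omega
  exact mid_isPath hi hj hm hss hmid this h₂

end KM

namespace KM

lemma phi_inj {k₁ l₁ : ℕ} {b₁ b₂ c₁ c₂ : Bool} {p₁ q p₁' q' : List Stp}
    (h₁ : IsPath S2 k₁ p₁) (h₂ : IsPath S2 l₁ p₁')
    (hne : (b₁ || b₂) = true → p₁ ≠ []) (hne' : (c₁ || c₂) = true → p₁' ≠ [])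
    (heq : phi b₁ b₂ p₁ q = phi c₁ c₂ p₁' q') :
    b₁ = c₁ ∧ b₂ = c₂ ∧ p₁ = p₁' ∧ q = q' := by
  obtain ⟨i, j, m, e, hi, hj, hb₁, hb₂, hm, hss, hmid, hfs, hrec⟩ :=
    phi_spec b₁ b₂ q h₁ hne
  obtain ⟨i', j', m', e', hi', hj', hb₁', hb₂', hm', hss', hmid', hfs', hrec'⟩ :=
    phi_spec c₁ c₂ q' h₂ hne'
  rw [e, e'] at heq
  have hii : i = i' := by
    have := congrArg List.headI heq
    simp at this
    exact this
  have hlen : m.length = m'.length := by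
    by_contra hL
    rcases Nat.lt_or_ge m.length m'.length with hl | hl
    · have hA : ss (((i, i) :: (m ++ [(j, -j)] ++ q)).take (m.length + 2)) = 0 := by
        rw [ss_take_phiform, if_neg (by omega), if_neg (by omega)]
        simp
        omega
      rw [heq, ss_take_phiform, if_neg (by omega), if_pos (by omega)] at hA
      have := hmid' (m.length + 2 - 1)
      omega
    · have hl' : m'.length < m.length := by omega
      have hA : ss (((i', i') :: (m' ++ [(j', -j')] ++ q')).take (m'.length + 2)) = 0 := by
        rw [ss_take_phiform, if_neg (by omega), if_neg (by omega)]
        simp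
        omega
      rw [← heq, ss_take_phiform, if_neg (by omega), if_pos (by omega)] at hA
      have := hmid (m'.length + 2 - 1)
      omega
  have htail : m ++ [(j, -j)] ++ q = m' ++ [(j', -j')] ++ q' := by
    simpa using congrArg List.tail heq
  obtain ⟨hfront, hq⟩ := List.append_inj htail (by simp [hlen])
  obtain ⟨hmm, hjj⟩ := List.append_inj hfront hlen
  have hjj' : j = j' := by
    simp at hjj
    exact hjj
  have hbb₁ : b₁ = c₁ := by
    cases b₁ <;> cases c₁ <;>
      first | rfl | (exfalso; simp_all <;> omega)
  have hbb₂ : b₂ = c₂ := by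
    cases b₂ <;> cases c₂ <;>
      first | rfl | (exfalso; simp_all <;> omega)
  refine ⟨hbb₁, hbb₂, ?_, hq⟩
  rw [hrec, hrec', hii, hjj', hmm]

end KM

namespace KM

lemma phi_surj {n : ℕ} {p : List Stp} (h : IsPath S2 (n + 1) p) :
    ∃ (b₁ b₂ : Bool) (k₁ : ℕ) (p₁ q : List Stp), k₁ ≤ n ∧ IsPath S2 k₁ p₁ ∧
      IsPath S2 (n - k₁) q ∧ ((b₁ || b₂) = true → p₁ ≠ []) ∧ p = phi b₁ b₂ p₁ q := by
  have hne := isPath_ne_nil h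
  obtain ⟨h1, h2, h3, h4⟩ := (isPath_iff _ _).mp h
  have hex : ∃ k, 0 < k ∧ k ≤ p.length ∧ ss (p.take k) = 0 :=
    ⟨p.length, List.length_pos_iff.mpr hne, le_rfl, by rwa [List.take_length]⟩
  obtain ⟨hl0, hllen, hlss⟩ := Nat.find_spec hex
  set ℓ := Nat.find hex with hldef
  have hmin : ∀ t, 0 < t → t < ℓ → 1 ≤ ss (p.take t) := by
    intro t ht hlt
    have h5 := Nat.find_min hex hlt
    have h6 : ss (p.take t) ≠ 0 := fun hc => h5 ⟨ht, by omega, hc⟩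
    have := h4 t
    omega
  have hpBq : p = p.take ℓ ++ p.drop ℓ := (List.take_append_drop ℓ p).symm
  have hBlen : (p.take ℓ).length = ℓ := by
    rw [List.length_take]
    omega
  have hBsteps : ∀ s ∈ p.take ℓ, s ∈ S2 := fun s hs => h1 s (List.take_subset ℓ p hs)
  have hBNN : ∀ t, 0 ≤ ss ((p.take ℓ).take t) := by
    intro t
    rw [List.take_take]
    exact h4 _
  obtain ⟨c, hc⟩ := exists_semilength (p.take ℓ) hBsteps hlss
  have hBpath : IsPath S2 c (p.take ℓ) := (isPath_iff _ _).mpr ⟨hBsteps, hc, hlss, hBNN⟩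
  have hBne : p.take ℓ ≠ [] := by
    intro h0
    rw [h0] at hBlen
    simp at hBlen
    omega
  have hc1 : 1 ≤ c := by
    have := length_le_fs (p.take ℓ) hBsteps
    rw [hc, hBlen] at this
    omega
  -- the remaining part q
  have hqsteps : ∀ s ∈ p.drop ℓ, s ∈ S2 := fun s hs => h1 s (List.drop_subset ℓ p hs)
  have hqss : ss (p.drop ℓ) = 0 := by
    have := congrArg ss hpBq
    rw [ss_append] at this
    omega
  have hqfs : fs (p.drop ℓ) = 2 * ((n : ℤ) + 1) - 2 * c := by
    have := congrArg fs hpBq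
    rw [fs_append] at this
    push_cast at h2
    omega
  have hqNN : ∀ t, 0 ≤ ss ((p.drop ℓ).take t) := by
    intro t
    have := h4 (ℓ + t)
    rwa [List.take_add, ss_append, hlss, zero_add] at this
  have hcn : c ≤ n + 1 := by
    have := fs_nonneg (p.drop ℓ) hqsteps
    omega
  have hqpath : IsPath S2 (n + 1 - c) (p.drop ℓ) :=
    (isPath_iff _ _).mpr ⟨hqsteps, by push_cast [hcn]; omega, hqss, hqNN⟩
  -- shapes of B
  obtain ⟨u, t', hu, hBlast, hsst'⟩ := last_shape hBpath hBne
  have ht'ne : t' ≠ [] := by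
    rintro rfl
    simp at hsst'
    omega
  obtain ⟨hd, mid, rfl⟩ := List.exists_cons_of_ne_nil ht'ne
  obtain ⟨r, tB, hr, hBhead⟩ := head_shape hBpath hBne
  rw [hBlast, List.cons_append] at hBhead
  injection hBhead with h5 h6
  subst h5
  -- basic sums on B
  simp only [ss_cons] at hsst'
  have hsst'' : r + ss mid = u := by
    have : ((r, r) : Stp).2 = r := rfl
    omega
  have hssmid : ss mid = u - r := by
    rw [hBlast] at hlss
    simp only [List.cons_append, ss_cons, ss_append, ss_singleton] at hlss
    simp at hlss
    omega
  have hfsB : (r : ℤ) + fs mid + u = 2 * c := by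
    rw [hBlast] at hc
    simp only [List.cons_append, fs_cons, fs_append, fs_singleton] at hc
    simp at hc
    omega
  have hmidsteps : ∀ s ∈ mid, s ∈ S2 := by
    intro s hs
    apply hBsteps
    rw [hBlast]
    simp [hs]
  have hBlen' : ℓ = mid.length + 2 := by
    rw [hBlast] at hBlen
    simp at hBlen
    omega
  have hmid' : ∀ t, 1 ≤ r + ss (mid.take t) := by
    intro t
    rcases le_or_gt t mid.length with ht | ht
    · have := hmin (t + 1) (by omega) (by omega)
      have h7 : ss (p.take (t + 1)) = r + ss (mid.take t) := by
        have h8 : p.take (t + 1) = (p.take ℓ).take (t + 1) := by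
          rw [List.take_take]
          congr 1
          omega
        rw [h8, hBlast, List.cons_append, List.take_succ_cons,
          List.take_append_of_le_length ht]
        simp
      omega
    · rw [List.take_of_length_le (by omega)]
      omega
  -- assemble
  refine ⟨decide (2 ≤ r), decide (2 ≤ u), c - 1,
    (if 2 ≤ r then [(r-1, r-1)] else []) ++ mid ++
      (if 2 ≤ u then [(u-1, -(u-1))] else []), p.drop ℓ,
    by omega, ?_, ?_, ?_, ?_⟩
  · exact mid_isPath₂ hr hu hmidsteps (by omega) hmid' hfsB hc1
  · have hnc : n - (c - 1) = n + 1 - c := by omega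
    rw [hnc]
    exact hqpath
  · intro hb
    simp only [Bool.or_eq_true, decide_eq_true_eq] at hb
    rcases hb with hb | hb
    · rw [if_pos hb]
      simp
    · rw [if_pos hb]
      intro hcon
      have := congrArg List.length hcon
      simp at this
  · have hphi : phi (decide (2 ≤ r)) (decide (2 ≤ u))
        ((if 2 ≤ r then [(r-1, r-1)] else []) ++ mid ++
          (if 2 ≤ u then [(u-1, -(u-1))] else [])) (p.drop ℓ)
        = ((r, r) :: mid ++ [(u, -u)]) ++ p.drop ℓ := by
      by_cases hbr : 2 ≤ r <;> by_cases hbu : 2 ≤ u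
      · simp [phi, hbr, hbu, List.getLastD_concat, List.dropLast_concat, sub_add_cancel]
      · have hu1 : u = 1 := by omega
        subst hu1
        simp [phi, hbr, hbu, sub_add_cancel]
      · have hr1 : r = 1 := by omega
        subst hr1
        simp [phi, hbr, hbu, List.getLastD_concat, List.dropLast_concat, sub_add_cancel]
      · have hu1 : u = 1 := by omega
        have hr1 : r = 1 := by omega
        subst hu1; subst hr1
        simp [phi, hbr, hbu]
    rw [hphi, ← hBlast, List.take_append_drop]
end KM

namespace KM

abbrev A (n : ℕ) : Type := {p : List Stp // IsPath S2 n p}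

abbrev R (n : ℕ) : Type := Bool × Bool × (Σ k : Fin (n + 1), A k × A (n - k))

def cond {n : ℕ} (x : R n) : Prop :=
  (x.1 || x.2.1) = true → (x.2.2.2.1 : A x.2.2.1).1 ≠ []

noncomputable instance (n : ℕ) : DecidablePred (@cond n) := Classical.decPred _

def toPath {n : ℕ} (x : {x : R n // cond x}) : A (n + 1) :=
  ⟨phi x.1.1 x.1.2.1 x.1.2.2.2.1.1 x.1.2.2.2.2.1, by
    obtain ⟨⟨b₁, b₂, ⟨k, p₁, q⟩⟩, hc⟩ := x
    have h := phi_isPath b₁ b₂ p₁.2 q.2 hc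
    have hk : (k : ℕ) + 1 + (n - (k : ℕ)) = n + 1 := by
      have := k.2
      omega
    rwa [hk] at h⟩

lemma toPath_bijective (n : ℕ) : Function.Bijective (@toPath n) := by
  constructor
  · rintro ⟨⟨b₁, b₂, ⟨k, p₁, q⟩⟩, hc⟩ ⟨⟨c₁, c₂, ⟨k', p₁', q'⟩⟩, hc'⟩ hxy
    have heq : phi b₁ b₂ p₁.1 q.1 = phi c₁ c₂ p₁'.1 q'.1 :=
      congrArg Subtype.val hxy
    obtain ⟨hb1, hb2, hp, hq⟩ := phi_inj p₁.2 p₁'.2 hc hc' heq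
    subst hb1; subst hb2
    have hk : k = k' := by
      apply Fin.ext
      exact size_unique p₁.2 (hp ▸ p₁'.2)
    subst hk
    have hp' : p₁ = p₁' := Subtype.ext hp
    have hq' : q = q' := Subtype.ext hq
    subst hp'; subst hq'
    rfl
  · rintro ⟨p, hp⟩
    obtain ⟨b₁, b₂, k₁, p₁, q, hk, h₁, h₂, hne, hpe⟩ := phi_surj hp
    exact ⟨⟨⟨b₁, b₂, ⟨⟨k₁, by omega⟩, ⟨p₁, h₁⟩, ⟨q, h₂⟩⟩⟩, hne⟩, Subtype.ext hpe.symm⟩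

def toCompl {n : ℕ} (y : {b : Bool × Bool // b ≠ (false, false)} × A n) :
    {x : R n // ¬ cond x} :=
  ⟨(y.1.1.1, y.1.1.2, ⟨⟨0, Nat.succ_pos n⟩, ⟨[], isPath_nil⟩, y.2⟩), by
    intro hcond
    have hb : (y.1.1.1 || y.1.1.2) = true := by
      rcases y with ⟨⟨⟨b₁, b₂⟩, hbne⟩, q⟩
      cases b₁ <;> cases b₂ <;> first | rfl | (exact absurd rfl hbne)
    exact hcond hb rfl⟩

lemma toCompl_bijective (n : ℕ) : Function.Bijective (@toCompl n) := by
  constructor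
  · intro y z h
    have h1 := congrArg (fun x => x.1.1) h
    have h2 := congrArg (fun x => x.1.2.1) h
    have h3 := congrArg (fun x => x.1.2.2.2.2.1) h
    simp only [toCompl] at h1 h2 h3
    have hA : y.1 = z.1 := Subtype.ext (Prod.ext h1 h2)
    have hB : y.2 = z.2 := Subtype.ext h3
    exact Prod.ext hA hB
  · rintro ⟨⟨b₁, b₂, ⟨⟨kv, hkv⟩, p₁, q⟩⟩, hx⟩
    rw [cond] at hx
    push_neg at hx
    obtain ⟨hb, hp⟩ := hx
    have hk0 : kv = 0 := (size_unique (hp ▸ p₁.2) isPath_nil)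
    subst hk0
    have hbne : ((b₁, b₂) : Bool × Bool) ≠ (false, false) := by
      intro hcon
      rw [Prod.mk.injEq] at hcon
      obtain ⟨rfl, rfl⟩ := hcon
      simp at hb
    refine ⟨⟨⟨(b₁, b₂), hbne⟩, q⟩, ?_⟩
    unfold toCompl
    apply Subtype.ext
    simp only
    refine Prod.ext rfl (Prod.ext rfl ?_)
    have hp₁ : p₁ = ⟨[], isPath_nil⟩ := Subtype.ext hp
    rw [hp₁]

end KM

namespace KM

lemma card_bool_subtype : Nat.card {b : Bool × Bool // b ≠ (false, false)} = 3 := by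
  rw [Nat.card_eq_fintype_card]
  decide

lemma key (n : ℕ) :
    Nat.card (A (n + 1)) + 3 * Nat.card (A n) =
      4 * ∑ k ∈ Finset.range (n + 1), Nat.card (A k) * Nat.card (A (n - k)) := by
  classical
  have e1 : Nat.card (A (n + 1)) = Nat.card {x : R n // cond x} :=
    (Nat.card_eq_of_bijective _ (toPath_bijective n)).symm
  have e2 : Nat.card {x : R n // ¬ cond x} = 3 * Nat.card (A n) := by
    rw [← Nat.card_eq_of_bijective _ (toCompl_bijective n), Nat.card_prod,
      card_bool_subtype]
  have e3 : Nat.card {x : R n // cond x} + Nat.card {x : R n // ¬ cond x} =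
      Nat.card (R n) := by
    rw [← Nat.card_sum]
    exact Nat.card_congr (Equiv.sumCompl cond)
  have e5 : Nat.card (Σ k : Fin (n + 1), A k × A (n - k)) =
      ∑ k ∈ Finset.range (n + 1), Nat.card (A k) * Nat.card (A (n - k)) := by
    letI : ∀ k : Fin (n + 1), Fintype (A k × A (n - k)) := fun _ => Fintype.ofFinite _
    rw [Nat.card_eq_fintype_card, Fintype.card_sigma,
      ← Fin.sum_univ_eq_sum_range (fun k => Nat.card (A k) * Nat.card (A (n - k))) (n + 1)]
    apply Finset.sum_congr rfl
    intro k _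
    rw [← Nat.card_eq_fintype_card, Nat.card_prod]
  have e4 : Nat.card (R n) =
      4 * ∑ k ∈ Finset.range (n + 1), Nat.card (A k) * Nat.card (A (n - k)) := by
    rw [Nat.card_prod, Nat.card_prod, e5]
    have hb : Nat.card Bool = 2 := by
      rw [Nat.card_eq_fintype_card]
      exact Fintype.card_bool
    rw [hb]
    ring
  omega

end KM

theorem kung_mier_S2 (P s : PowerSeries ℚ)
    (hP : ∀ n : ℕ, PowerSeries.coeff n P =
      if n = 0 then 1
      else (Nat.card {p : List (ℤ × ℤ) // IsPath S2 n p} : ℚ))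
    (hs0 : PowerSeries.constantCoeff s = 1)
    (hs2 : s ^ 2 = 1 - 10 * PowerSeries.X + 9 * PowerSeries.X ^ 2) :
    8 * PowerSeries.X * P = 1 + 3 * PowerSeries.X - s := by
  classical
  have hPn : ∀ n : ℕ, PowerSeries.coeff n P = (Nat.card (KM.A n) : ℚ) := by
    intro n
    rw [hP n]
    rcases Nat.eq_zero_or_pos n with rfl | hn
    · rw [if_pos rfl, KM.card_A_zero, Nat.cast_one]
    · rw [if_neg (by omega)]
  have hkey : ∀ n : ℕ, (Nat.card (KM.A (n + 1)) : ℚ) + 3 * (Nat.card (KM.A n) : ℚ)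
      = 4 * ∑ k ∈ Finset.range (n + 1),
          (Nat.card (KM.A k) : ℚ) * (Nat.card (KM.A (n - k)) : ℚ) := by
    intro n
    exact_mod_cast congrArg (fun m : ℕ => (m : ℚ)) (KM.key n)
  have hC3 : ((PowerSeries.C (R := ℚ)) (3 : ℚ)) = (3 : PowerSeries ℚ) := by
    exact map_ofNat (PowerSeries.C (R := ℚ)) 3
  have hC4 : ((PowerSeries.C (R := ℚ)) (4 : ℚ)) = (4 : PowerSeries ℚ) := by
    exact map_ofNat (PowerSeries.C (R := ℚ)) 4
  have hfun : (1 + 3 * PowerSeries.X) * P = 1 + 4 * PowerSeries.X * P ^ 2 := by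
    ext n
    have e1 : (1 + 3 * PowerSeries.X) * P
        = P + PowerSeries.C (R := ℚ) 3 * (PowerSeries.X * P) := by
      rw [hC3]; ring
    have e2 : (1 : PowerSeries ℚ) + 4 * PowerSeries.X * P ^ 2
        = 1 + PowerSeries.C (R := ℚ) 4 * (PowerSeries.X * (P * P)) := by
      rw [hC4]; ring
    rw [e1, e2, map_add, map_add]
    cases n with
    | zero =>
      have h0 : PowerSeries.constantCoeff (R := ℚ) P = 1 := by
        have := hPn 0
        rw [PowerSeries.coeff_zero_eq_constantCoeff] at this
        rw [this, KM.card_A_zero, Nat.cast_one]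
      simp [PowerSeries.coeff_zero_eq_constantCoeff, map_mul,
        PowerSeries.constantCoeff_X, h0]
    | succ n =>
      rw [PowerSeries.coeff_C_mul, PowerSeries.coeff_C_mul,
        PowerSeries.coeff_succ_X_mul, PowerSeries.coeff_succ_X_mul,
        PowerSeries.coeff_mul, Finset.Nat.sum_antidiagonal_eq_sum_range_succ_mk,
        PowerSeries.coeff_one, if_neg (Nat.succ_ne_zero n), zero_add]
      simpa only [hPn] using hkey n
  have hsq : (1 + 3 * PowerSeries.X - 8 * PowerSeries.X * P) ^ 2 = s ^ 2 := by
    rw [hs2]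
    linear_combination (-16 * PowerSeries.X) * hfun
  have hfac : (1 + 3 * PowerSeries.X - 8 * PowerSeries.X * P - s) *
      (1 + 3 * PowerSeries.X - 8 * PowerSeries.X * P + s) = 0 := by
    linear_combination hsq
  rcases mul_eq_zero.mp hfac with h | h
  · linear_combination -h
  · exfalso
    have h0 := congrArg (PowerSeries.constantCoeff (R := ℚ)) h
    simp only [map_add, map_sub, map_mul, map_one, PowerSeries.constantCoeff_X,
      hs0, map_zero] at h0
    norm_num at h0
end

section
/- With R̄_L(x,y,z) = R_L(x,y,z) − 1, one has the identity of formal power series (1−xz+x)² · R̄_{U1}(x,y,z) = (1−xz)² · R̄_{UL_{S3}}(x,y,z), where U1 is the set of Schröder paths with at least one U step that start with a U step and end with a D step. -/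
noncomputable def Xv : MvPowerSeries (Fin 3) ℚ := MvPowerSeries.X 0
noncomputable def Yv : MvPowerSeries (Fin 3) ℚ := MvPowerSeries.X 1
noncomputable def Zv : MvPowerSeries (Fin 3) ℚ := MvPowerSeries.X 2

/-- The monomial `x^n y^a z^b` as an exponent vector. -/
noncomputable def m3 (n a b : ℕ) : Fin 3 →₀ ℕ :=
  Finsupp.single (0 : Fin 3) n + Finsupp.single 1 a + Finsupp.single 2 b

noncomputable def Apoly : MvPowerSeries (Fin 3) ℚ := 1 - Xv * Zv
noncomputable def Bpoly : MvPowerSeries (Fin 3) ℚ := Xv + Yv * (1 - Xv * Zv)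
noncomputable def Cpoly : MvPowerSeries (Fin 3) ℚ := 1 - Xv * Zv + Xv
noncomputable def Delta : MvPowerSeries (Fin 3) ℚ :=
  Apoly ^ 4 - 2 * Xv * Apoly ^ 2 * (Bpoly ^ 2 + Cpoly ^ 2)
    + Xv ^ 2 * (Bpoly ^ 2 - Cpoly ^ 2) ^ 2

def U : ℤ × ℤ := (1, 1)
def D : ℤ × ℤ := (1, -1)

-- auxiliary
def Hs : ℤ × ℤ := (2, 0)

def ac (f : ℤ × ℤ → ℤ × ℤ → Bool) : List (ℤ × ℤ) → ℕ
  | [] => 0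
  | [_] => 0
  | x :: y :: l => (if f x y then 1 else 0) + ac f (y :: l)

lemma ac_eq (f : ℤ × ℤ → ℤ × ℤ → Bool) :
    ∀ p : List (ℤ × ℤ), ac f p = (p.zip p.tail).countP (fun q => f q.1 q.2)
  | [] => rfl
  | [_] => rfl
  | x :: y :: l => by
    rw [ac, ac_eq f (y :: l)]
    simp [List.countP_cons, add_comm]

lemma dr_eq_ac (p : List (ℤ × ℤ)) : dr p = ac (fun x y => x == y && x.2 != 0) p :=
  by unfold dr; exact (ac_eq (fun x y => x == y && x.2 != 0) p).symm

lemma hr_eq_ac (p : List (ℤ × ℤ)) : hr p = ac (fun x y => x == y && x.2 == 0) p :=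
  by unfold hr; exact (ac_eq (fun x y => x == y && x.2 == 0) p).symm

lemma ac_cons (f : ℤ × ℤ → ℤ × ℤ → Bool) {p : List (ℤ × ℤ)} {y : ℤ × ℤ} (x : ℤ × ℤ)
    (h : p.head? = some y) : ac f (x :: p) = (if f x y then 1 else 0) + ac f p := by
  cases p with
  | nil => simp at h
  | cons a t => rw [List.head?_cons, Option.some_inj] at h; subst h; rfl

lemma ac_concat (f : ℤ × ℤ → ℤ × ℤ → Bool) :
    ∀ (p : List (ℤ × ℤ)) {y : ℤ × ℤ} (x : ℤ × ℤ), p.getLast? = some y →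
      ac f (p ++ [x]) = ac f p + (if f y x then 1 else 0)
  | [], y, x => by simp
  | [a], y, x => by
    intro h
    simp only [List.getLast?_singleton, Option.some_inj] at h
    subst h
    simp [ac]
  | a :: b :: t, y, x => by
    intro h
    rw [List.getLast?_cons_cons] at h
    have := ac_concat f (b :: t) x h
    show ac f (a :: b :: (t ++ [x])) = _
    rw [ac, show b :: (t ++ [x]) = (b :: t) ++ [x] from rfl, this, ac]
    ring

def neg2 (s : ℤ × ℤ) : ℤ × ℤ := (s.1, -s.2)

lemma neg2_neg2 (s : ℤ × ℤ) : neg2 (neg2 s) = s := by cases s; simp [neg2]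

def rev (p : List (ℤ × ℤ)) : List (ℤ × ℤ) := (p.map neg2).reverse

lemma rev_rev (p : List (ℤ × ℤ)) : rev (rev p) = p := by
  simp [rev, List.map_reverse, List.map_map]
  have : neg2 ∘ neg2 = id := funext neg2_neg2
  rw [this, List.map_id]

lemma ac_rev (f g : ℤ × ℤ → ℤ × ℤ → Bool) (hfg : ∀ x y, g (neg2 y) (neg2 x) = f x y) :
    ∀ p : List (ℤ × ℤ), ac g (rev p) = ac f p
  | [] => rfl
  | [x] => rfl
  | x :: y :: t => by
    have ih := ac_rev f g hfg (y :: t)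
    have hlast : (rev (y :: t)).getLast? = some (neg2 y) := by
      rw [rev, List.getLast?_reverse, List.map_cons, List.head?_cons]
    have : rev (x :: y :: t) = rev (y :: t) ++ [neg2 x] := by
      simp [rev]
    rw [this, ac_concat g (rev (y :: t)) (neg2 x) hlast, ih, hfg, ac, add_comm]

lemma mem_S3 {s : ℤ × ℤ} : s ∈ S3 ↔ s = U ∨ s = D ∨ s = Hs := by
  simp [S3, U, D, Hs]

lemma dr_cons_H (p : List (ℤ × ℤ)) : dr (Hs :: p) = dr p := by
  cases p with
  | nil => rfl
  | cons y t =>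
    rw [dr_eq_ac, dr_eq_ac, ac_cons _ Hs (by rw [List.head?_cons])]
    have : (Hs == y && Hs.2 != 0) = false := by simp [Hs]
    rw [this]
    simp

lemma hr_cons_H {p : List (ℤ × ℤ)} {y : ℤ × ℤ} (h : p.head? = some y) :
    hr (Hs :: p) = (if y = Hs then 1 else 0) + hr p := by
  rw [hr_eq_ac, hr_eq_ac, ac_cons _ Hs h]
  congr 1
  have : (Hs == y && Hs.2 == 0) = decide (y = Hs) := by
    rw [Bool.eq_iff_iff]
    simp only [Bool.and_eq_true, beq_iff_eq, decide_eq_true_eq]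
    constructor
    · rintro ⟨h1, _⟩; exact h1.symm
    · rintro rfl; exact ⟨rfl, rfl⟩
  rw [this]
  simp

lemma isPath_cons_H {n : ℕ} {p : List (ℤ × ℤ)} :
    IsPath S3 (n + 1) (Hs :: p) ↔ IsPath S3 n p := by
  constructor
  · rintro ⟨h1, h2, h3, h4⟩
    refine ⟨fun s hs => h1 s (List.mem_cons_of_mem _ hs), ?_, ?_, ?_⟩
    · simp only [List.map_cons, List.sum_cons, Hs] at h2
      push_cast at h2 ⊢
      linarith
    · simpa [Hs] using h3
    · intro q hq
      have : 0 ≤ ((Hs :: q).map Prod.snd).sum := h4 _ (List.cons_prefix_cons.mpr ⟨rfl, hq⟩)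
      simpa [Hs] using this
  · rintro ⟨h1, h2, h3, h4⟩
    refine ⟨?_, ?_, ?_, ?_⟩
    · intro s hs
      rcases List.mem_cons.mp hs with h | h
      · subst h; simp [S3, Hs]
      · exact h1 s h
    · simp only [List.map_cons, List.sum_cons, Hs, h2]
      push_cast
      ring
    · simpa [Hs] using h3
    · intro q hq
      cases q with
      | nil => simp
      | cons s t =>
        obtain ⟨hs, ht⟩ := List.cons_prefix_cons.mp hq
        subst hs
        simpa [Hs] using h4 t ht

lemma head_cases {n : ℕ} {p : List (ℤ × ℤ)} {s : ℤ × ℤ} (h : IsPath S3 n p)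
    (hs : p.head? = some s) : s = U ∨ s = Hs := by
  cases p with
  | nil => simp at hs
  | cons a t =>
    obtain rfl : a = s := by simpa using hs
    rcases mem_S3.mp (h.1 a List.mem_cons_self) with h' | h' | h'
    · exact Or.inl h'
    · exfalso
      have := h.2.2.2 [a] ⟨t, rfl⟩
      rw [h'] at this
      simp [D] at this
    · exact Or.inr h'

lemma length_le_fst_sum :
    ∀ p : List (ℤ × ℤ), (∀ s ∈ p, s ∈ S3) → (p.length : ℤ) ≤ (p.map Prod.fst).sum
  | [] => by simp
  | s :: t => by
    intro h
    have ht := length_le_fst_sum t (fun x hx => h x (List.mem_cons_of_mem _ hx))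
    have hs : 1 ≤ s.1 := by
      rcases mem_S3.mp (h s List.mem_cons_self) with h' | h' | h' <;>
        simp [h', U, D, Hs]
    simp only [List.length_cons, List.map_cons, List.sum_cons]
    push_cast
    linarith

lemma isPath_zero {p : List (ℤ × ℤ)} (h : IsPath S3 0 p) : p = [] := by
  have h1 := length_le_fst_sum p h.1
  rw [h.2.1] at h1
  have : p.length = 0 := by push_cast at h1; omega
  exact List.length_eq_zero_iff.mp this

lemma paths_finite (n : ℕ) : {p : List (ℤ × ℤ) | IsPath S3 n p}.Finite := by
  have hS3 : S3.Finite := (Set.finite_singleton _).insert _ |>.insert _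
  have : Finite ↥S3 := hS3.to_subtype
  apply Set.Finite.subset ((List.finite_length_le ↥S3 (2 * n)).image (List.map Subtype.val))
  intro p hp
  have h1 := length_le_fst_sum p hp.1
  rw [hp.2.1] at h1
  refine ⟨p.attachWith (· ∈ S3) hp.1, ?_, by simpa using List.attach_map_subtype_val p⟩
  simp only [Set.mem_setOf_eq, List.length_attachWith]
  exact_mod_cast h1

lemma snd_sum_neg2 : ∀ l : List (ℤ × ℤ),
    ((l.map neg2).map Prod.snd).sum = -((l.map Prod.snd).sum)
  | [] => by simp
  | x :: t => by
    show ((neg2 x :: t.map neg2).map Prod.snd).sum = _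
    simp only [List.map_cons, List.sum_cons]
    rw [snd_sum_neg2 t]
    show -x.2 + _ = _
    ring

lemma head?_rev (p : List (ℤ × ℤ)) : (rev p).head? = Option.map neg2 p.getLast? := by
  rw [rev, List.head?_reverse, List.getLast?_map]

lemma getLast?_rev (p : List (ℤ × ℤ)) : (rev p).getLast? = Option.map neg2 p.head? := by
  rw [rev, List.getLast?_reverse, List.head?_map]

lemma beq_neg2 (a b : ℤ × ℤ) : (neg2 a == neg2 b) = (a == b) := by
  rw [Bool.eq_iff_iff]
  simp only [beq_iff_eq]
  constructor
  · intro h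
    have := congrArg neg2 h
    rwa [neg2_neg2, neg2_neg2] at this
  · intro h; rw [h]

lemma dr_rev (p : List (ℤ × ℤ)) : dr (rev p) = dr p := by
  rw [dr_eq_ac, dr_eq_ac]
  apply ac_rev
  intro x y
  rw [beq_neg2]
  rw [Bool.eq_iff_iff]
  simp only [Bool.and_eq_true, beq_iff_eq, bne_iff_ne, ne_eq, neg2, neg_eq_zero]
  constructor
  · rintro ⟨rfl, h⟩; exact ⟨rfl, h⟩
  · rintro ⟨rfl, h⟩; exact ⟨rfl, h⟩

lemma hr_rev (p : List (ℤ × ℤ)) : hr (rev p) = hr p := by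
  rw [hr_eq_ac, hr_eq_ac]
  apply ac_rev
  intro x y
  rw [beq_neg2]
  rw [Bool.eq_iff_iff]
  simp only [Bool.and_eq_true, beq_iff_eq, neg2, neg_eq_zero]
  constructor
  · rintro ⟨rfl, h⟩; exact ⟨rfl, h⟩
  · rintro ⟨rfl, h⟩; exact ⟨rfl, h⟩

lemma isPath_rev {n : ℕ} {p : List (ℤ × ℤ)} (h : IsPath S3 n p) : IsPath S3 n (rev p) := by
  obtain ⟨h1, h2, h3, h4⟩ := h
  refine ⟨?_, ?_, ?_, ?_⟩
  · intro s hs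
    rw [rev, List.mem_reverse, List.mem_map] at hs
    obtain ⟨t, ht, rfl⟩ := hs
    rcases mem_S3.mp (h1 t ht) with rfl | rfl | rfl <;>
      simp [neg2, U, D, Hs, S3]
  · rw [rev, List.map_reverse, List.sum_reverse, List.map_map]
    have : (Prod.fst ∘ neg2) = Prod.fst := funext fun s => rfl
    rw [this, h2]
  · rw [rev, List.map_reverse, List.sum_reverse]
    have := snd_sum_neg2 p
    rw [List.map_map] at this ⊢
    rw [this, h3, neg_zero]
  · intro q hq
    have h5 : q.reverse <:+ p.map neg2 := by
      apply (List.reverse_prefix (l₁ := q.reverse) (l₂ := p.map neg2)).mp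
      rw [List.reverse_reverse]
      exact hq
    obtain ⟨t, ht⟩ := h5
    have htp : t <+: p.map neg2 := ⟨q.reverse, ht⟩
    have htake : t = (p.take t.length).map neg2 :=
      (List.prefix_iff_eq_take.mp htp).trans List.map_take.symm
    have hsum : (q.map Prod.snd).sum = -((t.map Prod.snd).sum) := by
      have := congrArg (fun l => (l.map Prod.snd).sum) ht
      simp only [List.map_append, List.sum_append, List.map_reverse, List.sum_reverse] at this
      rw [snd_sum_neg2, h3, neg_zero] at this
      linarith
    rw [hsum, htake, snd_sum_neg2, neg_neg]
    exact h4 _ (List.take_prefix _ _)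

def PathSet (P : List (ℤ × ℤ) → Prop) (n a b : ℕ) : Set (List (ℤ × ℤ)) :=
  {p | IsPath S3 n p ∧ P p ∧ dr p = a ∧ hr p = b}

def UPred (P : List (ℤ × ℤ) → Prop) : List (ℤ × ℤ) → Prop :=
  fun p => P p ∧ p.head? = some U

def HPred (P : List (ℤ × ℤ) → Prop) : List (ℤ × ℤ) → Prop :=
  fun p => P p ∧ p.head? = some Hs

noncomputable def cnt (P : List (ℤ × ℤ) → Prop) (n a b : ℕ) : ℕ := (PathSet P n a b).ncard

lemma pathSet_finite (P : List (ℤ × ℤ) → Prop) (n a b : ℕ) : (PathSet P n a b).Finite :=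
  (paths_finite n).subset fun _ hp => hp.1

lemma U_ne_Hs : U ≠ Hs := by simp [U, Hs, Prod.ext_iff]

lemma cnt_zero {P : List (ℤ × ℤ) → Prop} (h : ¬ P []) (a b : ℕ) : cnt P 0 a b = 0 := by
  have he : PathSet P 0 a b = ∅ := by
    ext p
    simp only [Set.mem_empty_iff_false, iff_false, PathSet, Set.mem_setOf_eq]
    rintro ⟨hp, hP, -⟩
    exact h (isPath_zero hp ▸ hP)
  rw [cnt, he, Set.ncard_empty]

lemma not_UPred_nil (P : List (ℤ × ℤ) → Prop) : ¬ UPred P [] := by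
  rintro ⟨-, h⟩; simp at h

lemma split_set {P : List (ℤ × ℤ) → Prop} (hne : ¬ P []) (n a b : ℕ) :
    PathSet P n a b = PathSet (UPred P) n a b ∪ PathSet (HPred P) n a b := by
  ext p
  constructor
  · rintro ⟨h1, h2, h3, h4⟩
    have hpne : p ≠ [] := fun h => hne (h ▸ h2)
    obtain ⟨s, hs⟩ : ∃ s, p.head? = some s := by
      cases p with
      | nil => exact absurd rfl hpne
      | cons x t => exact ⟨x, rfl⟩
    rcases head_cases h1 hs with rfl | rfl
    · exact Or.inl ⟨h1, ⟨h2, hs⟩, h3, h4⟩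
    · exact Or.inr ⟨h1, ⟨h2, hs⟩, h3, h4⟩
  · rintro (⟨h1, ⟨h2, -⟩, h3, h4⟩ | ⟨h1, ⟨h2, -⟩, h3, h4⟩) <;> exact ⟨h1, h2, h3, h4⟩

lemma disj_UH (P Q : List (ℤ × ℤ) → Prop) (n a b n' a' b' : ℕ) :
    Disjoint (PathSet (UPred P) n a b) (PathSet (HPred Q) n' a' b') := by
  rw [Set.disjoint_left]
  rintro p ⟨-, ⟨-, h⟩, -⟩ ⟨-, ⟨-, h'⟩, -⟩
  rw [h] at h'
  exact U_ne_Hs (Option.some_inj.mp h')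

lemma cnt_split {P : List (ℤ × ℤ) → Prop} (hne : ¬ P []) (n a b : ℕ) :
    cnt P n a b = cnt (UPred P) n a b + cnt (HPred P) n a b := by
  rw [cnt, split_set hne,
    Set.ncard_union_eq (disj_UH P P n a b n a b) (pathSet_finite _ _ _ _) (pathSet_finite _ _ _ _)]
  rfl

lemma uncons_HPred {P : List (ℤ × ℤ) → Prop} {p : List (ℤ × ℤ)} {n a b : ℕ}
    (hne : ¬ P []) (hH : ∀ q, P (Hs :: q) ↔ P q)
    (hp : p ∈ PathSet (HPred P) (n + 1) a b) :
    ∃ p' y, p = Hs :: p' ∧ IsPath S3 n p' ∧ P p' ∧ p'.head? = some y ∧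
      (y = U ∨ y = Hs) ∧ dr p' = a ∧ (if y = Hs then 1 else 0) + hr p' = b := by
  obtain ⟨h1, ⟨h2, hhead⟩, h3, h4⟩ := hp
  obtain ⟨p', rfl⟩ : ∃ p', p = Hs :: p' := by
    cases p with
    | nil => simp at hhead
    | cons x t =>
      obtain rfl : x = Hs := by simpa using hhead
      exact ⟨t, rfl⟩
  have hp' : IsPath S3 n p' := isPath_cons_H.mp h1
  have hP' : P p' := (hH p').mp h2
  have hpne : p' ≠ [] := fun h => hne (h ▸ hP')
  obtain ⟨y, hy⟩ : ∃ y, p'.head? = some y := by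
    cases p' with
    | nil => exact absurd rfl hpne
    | cons x t => exact ⟨x, rfl⟩
  refine ⟨p', y, rfl, hp', hP', hy, head_cases hp' hy, ?_, ?_⟩
  · rw [dr_cons_H] at h3; exact h3
  · rw [hr_cons_H hy] at h4; exact h4

lemma cons_HPred {P : List (ℤ × ℤ) → Prop} {p' : List (ℤ × ℤ)} {n a : ℕ} {y : ℤ × ℤ}
    (hH : ∀ q, P (Hs :: q) ↔ P q)
    (h1 : IsPath S3 n p') (h2 : P p') (hy : p'.head? = some y) (h3 : dr p' = a) :
    Hs :: p' ∈ PathSet (HPred P) (n + 1) a ((if y = Hs then 1 else 0) + hr p') := by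
  exact ⟨isPath_cons_H.mpr h1, ⟨(hH p').mpr h2, rfl⟩, by rw [dr_cons_H]; exact h3,
    hr_cons_H hy⟩

lemma K2a_set {P : List (ℤ × ℤ) → Prop} (hne : ¬ P []) (hH : ∀ q, P (Hs :: q) ↔ P q)
    (n a : ℕ) :
    PathSet (HPred P) (n + 1) a 0 = (Hs :: ·) '' PathSet (UPred P) n a 0 := by
  ext p
  constructor
  · intro hp
    obtain ⟨p', y, rfl, hp', hP', hy, hcase, hdr, hhr⟩ := uncons_HPred hne hH hp
    rcases hcase with rfl | rfl
    · refine ⟨p', ⟨hp', ⟨hP', hy⟩, hdr, ?_⟩, rfl⟩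
      rw [if_neg U_ne_Hs, zero_add] at hhr
      exact hhr
    · rw [if_pos rfl] at hhr; omega
  · rintro ⟨p', ⟨h1, ⟨h2, hy⟩, h3, h4⟩, rfl⟩
    have := cons_HPred hH h1 h2 hy h3
    rwa [if_neg U_ne_Hs, zero_add, h4] at this

lemma K2b_set {P : List (ℤ × ℤ) → Prop} (hne : ¬ P []) (hH : ∀ q, P (Hs :: q) ↔ P q)
    (n a b : ℕ) :
    PathSet (HPred P) (n + 1) a (b + 1) =
      (Hs :: ·) '' (PathSet (UPred P) n a (b + 1) ∪ PathSet (HPred P) n a b) := by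
  ext p
  constructor
  · intro hp
    obtain ⟨p', y, rfl, hp', hP', hy, hcase, hdr, hhr⟩ := uncons_HPred hne hH hp
    rcases hcase with rfl | rfl
    · refine ⟨p', Or.inl ⟨hp', ⟨hP', hy⟩, hdr, ?_⟩, rfl⟩
      rw [if_neg U_ne_Hs, zero_add] at hhr
      exact hhr
    · refine ⟨p', Or.inr ⟨hp', ⟨hP', hy⟩, hdr, ?_⟩, rfl⟩
      rw [if_pos rfl] at hhr
      omega
  · rintro ⟨p', (⟨h1, ⟨h2, hy⟩, h3, h4⟩ | ⟨h1, ⟨h2, hy⟩, h3, h4⟩), rfl⟩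
    · have := cons_HPred hH h1 h2 hy h3
      rwa [if_neg U_ne_Hs, zero_add, h4] at this
    · have := cons_HPred hH h1 h2 hy h3
      rw [if_pos rfl, h4, Nat.add_comm 1 b] at this
      exact this

lemma cnt_HP_zero {P : List (ℤ × ℤ) → Prop} (hne : ¬ P []) (hH : ∀ q, P (Hs :: q) ↔ P q)
    (n a : ℕ) : cnt (HPred P) (n + 1) a 0 = cnt (UPred P) n a 0 := by
  rw [cnt, K2a_set hne hH, Set.ncard_image_of_injective _ (List.cons_injective)]
  rfl

lemma cnt_HP_succ {P : List (ℤ × ℤ) → Prop} (hne : ¬ P []) (hH : ∀ q, P (Hs :: q) ↔ P q)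
    (n a b : ℕ) :
    cnt (HPred P) (n + 1) a (b + 1) = cnt (UPred P) n a (b + 1) + cnt (HPred P) n a b := by
  rw [cnt, K2b_set hne hH, Set.ncard_image_of_injective _ (List.cons_injective),
    Set.ncard_union_eq (disj_UH P P n a (b+1) n a b) (pathSet_finite _ _ _ _) (pathSet_finite _ _ _ _)]
  rfl

lemma main_count {P : List (ℤ × ℤ) → Prop} (hne : ¬ P []) (hH : ∀ q, P (Hs :: q) ↔ P q)
    (n a b : ℕ) :
    ((cnt P n a b : ℚ) + (if 1 ≤ n ∧ 1 ≤ b then (cnt (UPred P) (n-1) a (b-1) : ℚ) else 0))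
      = (cnt (UPred P) n a b : ℚ) + (if 1 ≤ n then (cnt (UPred P) (n-1) a b : ℚ) else 0)
        + (if 1 ≤ n ∧ 1 ≤ b then (cnt P (n-1) a (b-1) : ℚ) else 0) := by
  rcases n with _ | m
  · rw [if_neg (by omega : ¬ (1 ≤ 0 ∧ 1 ≤ b)), if_neg (by omega : ¬ ((1:ℕ) ≤ 0)),
      if_neg (by omega : ¬ (1 ≤ 0 ∧ 1 ≤ b)), cnt_zero hne a b, cnt_zero (not_UPred_nil P) a b]
    simp
  · rcases b with _ | b'
    · rw [if_neg (by omega : ¬ (1 ≤ m + 1 ∧ (1:ℕ) ≤ 0)), if_neg (by omega : ¬ (1 ≤ m + 1 ∧ (1:ℕ) ≤ 0)),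
        if_pos (by omega : 1 ≤ m + 1), Nat.add_sub_cancel]
      rw [cnt_split hne, cnt_HP_zero hne hH]
      push_cast
      ring
    · rw [if_pos (⟨by omega, by omega⟩ : 1 ≤ m + 1 ∧ 1 ≤ b' + 1),
        if_pos (⟨by omega, by omega⟩ : 1 ≤ m + 1 ∧ 1 ≤ b' + 1),
        if_pos (by omega : 1 ≤ m + 1), Nat.add_sub_cancel, Nat.add_sub_cancel]
      rw [cnt_split hne (m+1) a (b'+1), cnt_HP_succ hne hH, cnt_split hne m a b']
      push_cast
      ring

lemma m3_apply_0 (n a b : ℕ) : m3 n a b 0 = n := by simp [m3, Finsupp.single_apply]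
lemma m3_apply_1 (n a b : ℕ) : m3 n a b 1 = a := by simp [m3, Finsupp.single_apply]
lemma m3_apply_2 (n a b : ℕ) : m3 n a b 2 = b := by simp [m3, Finsupp.single_apply]

lemma eq_m3 (m : Fin 3 →₀ ℕ) : m = m3 (m 0) (m 1) (m 2) := by
  ext i; fin_cases i <;> simp [m3, Finsupp.single_apply]

lemma m3_le {k l j n a b : ℕ} : m3 k l j ≤ m3 n a b ↔ k ≤ n ∧ l ≤ a ∧ j ≤ b := by
  rw [Finsupp.le_def]
  constructor
  · intro h
    refine ⟨?_, ?_, ?_⟩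
    · have := h 0; rwa [m3_apply_0, m3_apply_0] at this
    · have := h 1; rwa [m3_apply_1, m3_apply_1] at this
    · have := h 2; rwa [m3_apply_2, m3_apply_2] at this
  · rintro ⟨h1, h2, h3⟩ i
    fin_cases i
    · rw [show ((⟨0, by omega⟩ : Fin 3)) = (0 : Fin 3) from rfl, m3_apply_0, m3_apply_0]; exact h1
    · rw [show ((⟨1, by omega⟩ : Fin 3)) = (1 : Fin 3) from rfl, m3_apply_1, m3_apply_1]; exact h2
    · rw [show ((⟨2, by omega⟩ : Fin 3)) = (2 : Fin 3) from rfl, m3_apply_2, m3_apply_2]; exact h3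

lemma m3_sub (k l j n a b : ℕ) : m3 n a b - m3 k l j = m3 (n - k) (a - l) (b - j) := by
  ext i
  rw [Finsupp.tsub_apply]
  fin_cases i
  · rw [show ((⟨0, by omega⟩ : Fin 3)) = (0 : Fin 3) from rfl, m3_apply_0, m3_apply_0, m3_apply_0]
  · rw [show ((⟨1, by omega⟩ : Fin 3)) = (1 : Fin 3) from rfl, m3_apply_1, m3_apply_1, m3_apply_1]
  · rw [show ((⟨2, by omega⟩ : Fin 3)) = (2 : Fin 3) from rfl, m3_apply_2, m3_apply_2, m3_apply_2]

lemma XZ_monomial : Xv * Zv = MvPowerSeries.monomial (m3 1 0 1) 1 := by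
  rw [Xv, Zv, MvPowerSeries.X_def, MvPowerSeries.X_def, MvPowerSeries.monomial_mul_monomial,
    one_mul]
  have h : (Finsupp.single (0 : Fin 3) 1 + Finsupp.single (2 : Fin 3) 1) = m3 1 0 1 := by
    ext i; fin_cases i <;> simp [m3, Finsupp.single_apply]
  rw [h]

lemma X_monomial : Xv = MvPowerSeries.monomial (m3 1 0 0) 1 := by
  rw [Xv, MvPowerSeries.X_def]
  have h : (Finsupp.single (0 : Fin 3) 1) = m3 1 0 0 := by
    ext i; fin_cases i <;> simp [m3, Finsupp.single_apply]
  rw [h]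

lemma coeff_XZ_mul (S : MvPowerSeries (Fin 3) ℚ) (n a b : ℕ) :
    MvPowerSeries.coeff (m3 n a b) (Xv * Zv * S) =
      if 1 ≤ n ∧ 1 ≤ b then MvPowerSeries.coeff (m3 (n-1) a (b-1)) S else 0 := by
  rw [XZ_monomial, MvPowerSeries.coeff_monomial_mul]
  by_cases h : 1 ≤ n ∧ 1 ≤ b
  · rw [if_pos (m3_le.mpr ⟨h.1, by omega, h.2⟩), if_pos h, m3_sub, one_mul, Nat.sub_zero]
  · rw [if_neg (fun hc => h ⟨(m3_le.mp hc).1, (m3_le.mp hc).2.2⟩), if_neg h]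

lemma coeff_X_mul (S : MvPowerSeries (Fin 3) ℚ) (n a b : ℕ) :
    MvPowerSeries.coeff (m3 n a b) (Xv * S) =
      if 1 ≤ n then MvPowerSeries.coeff (m3 (n-1) a b) S else 0 := by
  rw [X_monomial, MvPowerSeries.coeff_monomial_mul]
  by_cases h : 1 ≤ n
  · rw [if_pos (m3_le.mpr ⟨h, by omega, by omega⟩), if_pos h, m3_sub, one_mul,
      Nat.sub_zero, Nat.sub_zero]
  · rw [if_neg (fun hc => h (m3_le.mp hc).1), if_neg h]

lemma series_step (S T : MvPowerSeries (Fin 3) ℚ) (f g : ℕ → ℕ → ℕ → ℚ)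
    (hS : ∀ n a b, MvPowerSeries.coeff (m3 n a b) S = f n a b)
    (hT : ∀ n a b, MvPowerSeries.coeff (m3 n a b) T = g n a b)
    (hfg : ∀ n a b, f n a b + (if 1 ≤ n ∧ 1 ≤ b then g (n-1) a (b-1) else 0)
      = g n a b + (if 1 ≤ n then g (n-1) a b else 0)
        + (if 1 ≤ n ∧ 1 ≤ b then f (n-1) a (b-1) else 0)) :
    Apoly * S = Cpoly * T := by
  ext m
  obtain ⟨n, a, b, rfl⟩ : ∃ n a b, m = m3 n a b := ⟨m 0, m 1, m 2, eq_m3 m⟩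
  rw [Apoly, Cpoly, sub_mul, one_mul, add_mul, sub_mul, one_mul, map_sub, map_add, map_sub]
  rw [coeff_XZ_mul, coeff_XZ_mul, coeff_X_mul]
  simp only [hS, hT]
  have h1 := hfg n a b
  split_ifs at h1 ⊢ <;> linarith

def P0 : List (ℤ × ℤ) → Prop := fun p => U ∈ p
def P1 : List (ℤ × ℤ) → Prop := fun p => p.getLast? = some D

lemma card_eq_cnt0 (n a b : ℕ) :
    Nat.card {p : List (ℤ × ℤ) // IsPath S3 n p ∧ U ∈ p ∧ dr p = a ∧ hr p = b} =
      cnt P0 n a b := by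
  rw [cnt, ← Nat.card_coe_set_eq]
  apply Nat.card_congr
  exact Equiv.subtypeEquivRight fun p => Iff.rfl

lemma card_eq_cntU1 (n a b : ℕ) :
    Nat.card {p : List (ℤ × ℤ) // IsPath S3 n p ∧ U ∈ p ∧ p.head? = some U ∧
        p.getLast? = some D ∧ dr p = a ∧ hr p = b} =
      cnt (UPred P1) n a b := by
  rw [cnt, ← Nat.card_coe_set_eq]
  apply Nat.card_congr
  apply Equiv.subtypeEquivRight
  intro p
  constructor
  · rintro ⟨h1, _, h3, h4, h5, h6⟩
    exact ⟨h1, ⟨h4, h3⟩, h5, h6⟩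
  · rintro ⟨h1, ⟨h4, h3⟩, h5, h6⟩
    exact ⟨h1, List.mem_of_mem_head? (by simp [h3]), h3, h4, h5, h6⟩

lemma rev_inj : Function.Injective rev := fun x y h => by
  rw [← rev_rev x, h, rev_rev]

lemma neg2_D : neg2 D = U := by simp [neg2, D, U]
lemma neg2_U : neg2 U = D := by simp [neg2, D, U]

lemma cnt_rev_bridge (n a b : ℕ) : cnt (UPred P0) n a b = cnt P1 n a b := by
  rw [cnt, cnt]
  have himg : PathSet P1 n a b = rev '' PathSet (UPred P0) n a b := by
    ext q
    constructor
    · rintro ⟨h1, h2, h3, h4⟩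
      have hhd : (rev q).head? = some U := by
        rw [head?_rev, h2, Option.map_some, neg2_D]
      refine ⟨rev q, ⟨isPath_rev h1, ⟨List.mem_of_mem_head? (by simp [hhd]), hhd⟩,
        by rw [dr_rev]; exact h3, by rw [hr_rev]; exact h4⟩, rev_rev q⟩
    · rintro ⟨p, ⟨h1, ⟨h2, h3⟩, h4, h5⟩, rfl⟩
      refine ⟨isPath_rev h1, ?_, by rw [dr_rev]; exact h4, by rw [hr_rev]; exact h5⟩
      show (rev p).getLast? = some D
      rw [getLast?_rev, h3, Option.map_some, neg2_U]
  rw [himg, Set.ncard_image_of_injective _ rev_inj]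

noncomputable def E0 : MvPowerSeries (Fin 3) ℚ :=
  fun m => (cnt (UPred P0) (m 0) (m 1) (m 2) : ℚ)

lemma coeff_E0 (n a b : ℕ) :
    MvPowerSeries.coeff (m3 n a b) E0 = (cnt (UPred P0) n a b : ℚ) := by
  show E0 (m3 n a b) = _
  rw [E0]
  rw [m3_apply_0, m3_apply_1, m3_apply_2]


/-- part of Lemma 3.1: `(1−xz+x)²·R̄_{U1} = (1−xz)²·R̄_{UL_{S3}}`, where `U1` consists of Schröder paths with at least one U step starting with U and ending with D. -/
theorem lemma_U1 (Rsub Rall : MvPowerSeries (Fin 3) ℚ)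
    (hRsub : ∀ n a b : ℕ, MvPowerSeries.coeff (m3 n a b) Rsub =
      (Nat.card {p : List (ℤ × ℤ) //
        IsPath S3 n p ∧ U ∈ p ∧ p.head? = some U ∧ p.getLast? = some D ∧ dr p = a ∧ hr p = b} : ℚ))
    (hRall : ∀ n a b : ℕ, MvPowerSeries.coeff (m3 n a b) Rall =
      (Nat.card {p : List (ℤ × ℤ) //
        IsPath S3 n p ∧ U ∈ p ∧ dr p = a ∧ hr p = b} : ℚ)) :
    Cpoly ^ 2 * Rsub = Apoly ^ 2 * Rall := by
  have hP0nil : ¬ P0 [] := by simp [P0]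
  have hP0H : ∀ q, P0 (Hs :: q) ↔ P0 q := fun q => by
    simp [P0, List.mem_cons, U_ne_Hs]
  have hP1nil : ¬ P1 [] := by simp [P1]
  have hP1H : ∀ q, P1 (Hs :: q) ↔ P1 q := fun q => by
    cases q with
    | nil => simp [P1, Hs, D, Prod.ext_iff]
    | cons x t => simp [P1, List.getLast?_cons_cons]
  have h1 : Apoly * Rall = Cpoly * E0 := by
    apply series_step _ _ (fun n a b => (cnt P0 n a b : ℚ))
      (fun n a b => (cnt (UPred P0) n a b : ℚ))
    · intro n a b
      rw [hRall, card_eq_cnt0]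
    · exact coeff_E0
    · exact fun n a b => main_count hP0nil hP0H n a b
  have h2 : Apoly * E0 = Cpoly * Rsub := by
    apply series_step _ _ (fun n a b => (cnt P1 n a b : ℚ))
      (fun n a b => (cnt (UPred P1) n a b : ℚ))
    · intro n a b
      rw [coeff_E0, cnt_rev_bridge]
    · intro n a b
      rw [hRsub, card_eq_cntU1]
    · exact fun n a b => main_count hP1nil hP1H n a b
  calc Cpoly ^ 2 * Rsub = Cpoly * (Cpoly * Rsub) := by ring
    _ = Cpoly * (Apoly * E0) := by rw [h2]
    _ = Apoly * (Cpoly * E0) := by ring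
    _ = Apoly * (Apoly * Rall) := by rw [← h1]
    _ = Apoly ^ 2 * Rall := by ring
end

section
/- Let P_{S4}(x) = 1 + Σ_{n≥1} |L_{S4}(n)| xⁿ be the formal power series in x over ℚ counting the paths in L_{S4}(n). Then 2x(2−3x)² · P_{S4}(x) = (1−x)(1+x−4x²) − (1−x)²·√(1−12x+16x²), where the square root denotes the unique formal power series with constant term 1 whose square is 1−12x+16x². -/
namespace GFS4
open PowerSeries


/-- prefix-sum nonnegativity starting from height `k` -/
def Pre (k : ℤ) (p : List (ℤ × ℤ)) : Prop :=
  ∀ q : List (ℤ × ℤ), q <+: p → 0 ≤ k + (q.map Prod.snd).sum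

def SP (k n : ℕ) : Set (List (ℤ × ℤ)) :=
  {p | (∀ s ∈ p, s ∈ S4) ∧ (p.map Prod.fst).sum = (n : ℤ) ∧
    (p.map Prod.snd).sum = -(k : ℤ) ∧ Pre k p}

def SU (k n : ℕ) : Set (List (ℤ × ℤ)) := {p | p ∈ SP k n ∧ ∃ h t, p = h :: t ∧ 0 < h.2}
def SD (k n : ℕ) : Set (List (ℤ × ℤ)) := {p | p ∈ SP k n ∧ ∃ h t, p = h :: t ∧ h.2 < 0}
def SH (k n : ℕ) : Set (List (ℤ × ℤ)) := {p | p ∈ SP k n ∧ ∃ h t, p = h :: t ∧ h.2 = 0}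

lemma S4_fst_pos {x : ℤ × ℤ} (h : x ∈ S4) : 0 < x.1 := by
  obtain ⟨r, hr, h | h | h⟩ := h <;> subst h <;> simpa using by omega

lemma S4_cases {x : ℤ × ℤ} (h : x ∈ S4) :
    (0 < x.2 ∧ x.1 = x.2) ∨ (x.2 < 0 ∧ x.1 = -x.2) ∨ (x.2 = 0 ∧ ∃ r, 0 < r ∧ x.1 = 2 * r) := by
  obtain ⟨r, hr, h | h | h⟩ := h <;> subst h <;> simp <;> omega

lemma up_mem {r : ℤ} (hr : 0 < r) : ((r, r) : ℤ × ℤ) ∈ S4 := ⟨r, hr, Or.inl rfl⟩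
lemma down_mem {r : ℤ} (hr : 0 < r) : ((r, -r) : ℤ × ℤ) ∈ S4 := ⟨r, hr, Or.inr (Or.inl rfl)⟩
lemma flat_mem {r : ℤ} (hr : 0 < r) : ((2 * r, 0) : ℤ × ℤ) ∈ S4 := ⟨r, hr, Or.inr (Or.inr rfl)⟩

lemma sum_fst_nonneg {p : List (ℤ × ℤ)} (h : ∀ s ∈ p, s ∈ S4) :
    0 ≤ (p.map Prod.fst).sum := by
  induction p with
  | nil => simp
  | cons a t ih =>
      simp only [List.map_cons, List.sum_cons]
      have h1 := S4_fst_pos (h a (by simp))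
      have h2 := ih (fun s hs => h s (by simp [hs]))
      omega

lemma nil_of_sum_fst_eq_zero {p : List (ℤ × ℤ)} (h : ∀ s ∈ p, s ∈ S4)
    (h0 : (p.map Prod.fst).sum = 0) : p = [] := by
  cases p with
  | nil => rfl
  | cons a t =>
      exfalso
      have h1 := S4_fst_pos (h a (by simp))
      have h2 := sum_fst_nonneg (fun s hs => h s (by simp [hs]) : ∀ s ∈ t, s ∈ S4)
      simp only [List.map_cons, List.sum_cons] at h0
      omega

lemma len_le_sum {p : List (ℤ × ℤ)} (h : ∀ s ∈ p, s ∈ S4) :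
    (p.length : ℤ) ≤ (p.map Prod.fst).sum := by
  induction p with
  | nil => simp
  | cons a t ih =>
      have h1 := S4_fst_pos (h a (by simp))
      have h2 := ih (fun s hs => h s (by simp [hs]))
      simp only [List.map_cons, List.sum_cons, List.length_cons]
      push_cast
      omega

lemma fst_le_sum {p : List (ℤ × ℤ)} (h : ∀ s ∈ p, s ∈ S4) {x : ℤ × ℤ} (hx : x ∈ p) :
    x.1 ≤ (p.map Prod.fst).sum := by
  induction p with
  | nil => simp at hx
  | cons a t ih =>
      simp only [List.map_cons, List.sum_cons]
      have h2 := sum_fst_nonneg (fun s hs => h s (by simp [hs]) : ∀ s ∈ t, s ∈ S4)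
      rcases List.mem_cons.mp hx with rfl | hx
      · omega
      · have := ih (fun s hs => h s (by simp [hs])) hx
        have h1 := S4_fst_pos (h a (by simp))
        omega

lemma pre_cons {k : ℤ} {h : ℤ × ℤ} {t : List (ℤ × ℤ)} :
    Pre k (h :: t) ↔ 0 ≤ k ∧ Pre (k + h.2) t := by
  constructor
  · intro hp
    refine ⟨by simpa using hp [] (by simp), fun q hq => ?_⟩
    have := hp (h :: q) (by simpa using hq)
    simp only [List.map_cons, List.sum_cons] at this
    linarith
  · rintro ⟨h0, hp⟩ q hq
    cases q with
    | nil => simpa using h0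
    | cons a q' =>
        obtain ⟨rfl, hq'⟩ := by simpa using (List.cons_prefix_cons.mp hq)
        have := hp q' hq'
        simp only [List.map_cons, List.sum_cons]
        linarith

lemma finite_lists {α : Type*} {T : Set α} (hT : T.Finite) :
    ∀ n : ℕ, {l : List α | l.length ≤ n ∧ ∀ s ∈ l, s ∈ T}.Finite := by
  intro n
  induction n with
  | zero =>
      apply Set.Finite.subset (Set.finite_singleton ([] : List α))
      rintro l ⟨hl, -⟩
      simpa using List.length_eq_zero_iff.mp (Nat.le_zero.mp hl)
  | succ n ih =>
      apply Set.Finite.subset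
        (Set.Finite.insert [] ((hT.biUnion (fun a _ => ih.image (a :: ·)))))
      rintro l ⟨hl, hmem⟩
      cases l with
      | nil => simp
      | cons a t =>
          right
          refine Set.mem_biUnion (hmem a (by simp)) ⟨t, ⟨?_, fun s hs => hmem s (by simp [hs])⟩, rfl⟩
          simpa using hl

lemma SP_finite (k n : ℕ) : (SP k n).Finite := by
  apply Set.Finite.subset
    (finite_lists (Set.finite_Icc ((1 : ℤ), -(n : ℤ)) ((n : ℤ), (n : ℤ))) n)
  rintro p ⟨hmem, hfst, -, -⟩
  constructor
  · have := len_le_sum hmem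
    rw [hfst] at this
    exact_mod_cast this
  · intro s hs
    have h1 := S4_fst_pos (hmem s hs)
    have h2 : s.1 ≤ (n : ℤ) := hfst ▸ fst_le_sum hmem hs
    have h3 : -s.1 ≤ s.2 ∧ s.2 ≤ s.1 := by
      rcases S4_cases (hmem s hs) with ⟨h, e⟩ | ⟨h, e⟩ | ⟨h, e⟩ <;> omega
    simp only [Set.mem_Icc, Prod.le_def]
    omega

lemma SU_finite (k n : ℕ) : (SU k n).Finite := (SP_finite k n).subset (fun p hp => hp.1)
lemma SD_finite (k n : ℕ) : (SD k n).Finite := (SP_finite k n).subset (fun p hp => hp.1)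
lemma SH_finite (k n : ℕ) : (SH k n).Finite := (SP_finite k n).subset (fun p hp => hp.1)

-- zero-length facts
lemma SP_zero_zero : SP 0 0 = {[]} := by
  ext p
  constructor
  · rintro ⟨hmem, hfst, -, -⟩
    simpa using nil_of_sum_fst_eq_zero hmem (by simpa using hfst)
  · rintro rfl
    refine ⟨by simp, by simp, by simp, fun q hq => ?_⟩
    simp [List.prefix_nil.mp hq]

lemma SP_zero_ne {k : ℕ} (hk : k ≠ 0) : SP k 0 = ∅ := by
  ext p
  simp only [Set.mem_empty_iff_false, iff_false]
  rintro ⟨hmem, hfst, hsnd, -⟩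
  have := nil_of_sum_fst_eq_zero hmem (by simpa using hfst)
  subst this
  simp at hsnd
  omega

lemma ne_nil_mem {k n : ℕ} {p : List (ℤ × ℤ)} (hp : p ∈ SP k n) (hn : n ≠ 0) : p ≠ [] := by
  rintro rfl
  have := hp.2.1
  simp at this
  omega

lemma SU_zero (k : ℕ) : SU k 0 = ∅ := by
  ext p
  simp only [Set.mem_empty_iff_false, iff_false]
  rintro ⟨hp, h, t, rfl, -⟩
  have := nil_of_sum_fst_eq_zero hp.1 (by simpa using hp.2.1)
  simp at this

lemma SD_zero (k : ℕ) : SD k 0 = ∅ := by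
  ext p
  simp only [Set.mem_empty_iff_false, iff_false]
  rintro ⟨hp, h, t, rfl, -⟩
  have := nil_of_sum_fst_eq_zero hp.1 (by simpa using hp.2.1)
  simp at this

lemma SH_zero (k : ℕ) : SH k 0 = ∅ := by
  ext p
  simp only [Set.mem_empty_iff_false, iff_false]
  rintro ⟨hp, h, t, rfl, -⟩
  have := nil_of_sum_fst_eq_zero hp.1 (by simpa using hp.2.1)
  simp at this

lemma SH_one (k : ℕ) : SH k 1 = ∅ := by
  ext p
  simp only [Set.mem_empty_iff_false, iff_false]
  rintro ⟨⟨hmem, hfst, -, -⟩, h, t, rfl, h0⟩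
  have hh := hmem h (by simp)
  rcases S4_cases hh with ⟨h1, -⟩ | ⟨h1, -⟩ | ⟨-, r, hr, he⟩
  · omega
  · omega
  · have h2 := sum_fst_nonneg (fun s hs => hmem s (by simp [hs]) : ∀ s ∈ t, s ∈ S4)
    simp only [List.map_cons, List.sum_cons] at hfst
    omega

-- the partition for n ≥ 1
lemma SP_partition (k : ℕ) (n : ℕ) (hn : n ≠ 0) :
    SP k n = SU k n ∪ SD k n ∪ SH k n := by
  ext p
  constructor
  · intro hp
    obtain ⟨h, t, rfl⟩ := List.exists_cons_of_ne_nil (ne_nil_mem hp hn)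
    rcases lt_trichotomy (h.2) 0 with h2 | h2 | h2
    · exact Or.inl (Or.inr ⟨hp, h, t, rfl, h2⟩)
    · exact Or.inr ⟨hp, h, t, rfl, h2⟩
    · exact Or.inl (Or.inl ⟨hp, h, t, rfl, h2⟩)
  · rintro ((h | h) | h) <;> exact h.1

lemma SUD_disj (k n : ℕ) : Disjoint (SU k n) (SD k n) := by
  rw [Set.disjoint_left]
  rintro p ⟨-, h, t, rfl, h1⟩ ⟨-, h', t', he, h2⟩
  obtain ⟨rfl, rfl⟩ := by simpa using he
  omega

lemma SUDH_disj (k n : ℕ) : Disjoint (SU k n ∪ SD k n) (SH k n) := by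
  rw [Set.disjoint_left]
  rintro p (⟨-, h, t, rfl, h1⟩ | ⟨-, h, t, rfl, h1⟩) ⟨-, h', t', he, h2⟩ <;>
  · obtain ⟨rfl, rfl⟩ := by simpa using he
    omega

lemma mem_cons_iff {k n : ℕ} {a b : ℤ} {t : List (ℤ × ℤ)} :
    ((a, b) :: t) ∈ SP k n ↔
      (a, b) ∈ S4 ∧ (∀ s ∈ t, s ∈ S4) ∧ a + (t.map Prod.fst).sum = (n : ℤ) ∧
      b + (t.map Prod.snd).sum = -(k : ℤ) ∧ 0 ≤ (k : ℤ) ∧ Pre ((k : ℤ) + b) t := by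
  constructor
  · rintro ⟨hmem, hfst, hsnd, hpre⟩
    obtain ⟨h0, hpre'⟩ := pre_cons.mp hpre
    exact ⟨hmem _ (by simp), fun s hs => hmem s (by simp [hs]),
      by simpa using hfst, by simpa using hsnd, h0, hpre'⟩
  · rintro ⟨h1, h2, h3, h4, h5, h6⟩
    refine ⟨?_, by simpa using h3, by simpa using h4, pre_cons.mpr ⟨h5, h6⟩⟩
    intro s hs
    rcases List.mem_cons.mp hs with rfl | hs
    · exact h1
    · exact h2 s hs

lemma cast_succ (k : ℕ) : ((k + 1 : ℕ) : ℤ) = (k : ℤ) + 1 := by push_cast; ring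

/-- the up-step splitting -/
lemma SU_rec (k n : ℕ) :
    SU k (n + 1) = ((fun p => ((1 : ℤ), (1 : ℤ)) :: p) '' SP (k + 1) n) ∪
      ((fun p => (p.headI + (1, 1)) :: p.tail) '' SU (k + 1) n) := by
  ext p
  constructor
  · rintro ⟨hp, ⟨a, b⟩, t, rfl, hpos⟩
    simp only at hpos
    obtain ⟨hh, hmem, hfst, hsnd, h0, hpre⟩ := mem_cons_iff.mp hp
    have he : a = b := by
      rcases S4_cases hh with ⟨-, e⟩ | ⟨c, -⟩ | ⟨c, -⟩ <;> simp at * <;> omega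
    subst he
    by_cases hr1 : a = 1
    · subst hr1
      left
      refine ⟨t, ⟨hmem, by push_cast at hfst ⊢; omega, by push_cast at hsnd ⊢; omega, ?_⟩, rfl⟩
      have : ((k + 1 : ℕ) : ℤ) = (k : ℤ) + 1 := cast_succ k
      rwa [this]
    · right
      refine ⟨(a - 1, a - 1) :: t,
        ⟨mem_cons_iff.mpr ⟨up_mem (by omega), hmem, ?_, ?_, by positivity, ?_⟩,
          ⟨_, _, rfl, by simp; omega⟩⟩, ?_⟩
      · push_cast at hfst ⊢; omega
      · push_cast at hsnd ⊢; omega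
      · have : (↑(k + 1) : ℤ) + (a - 1) = (k : ℤ) + a := by push_cast; ring
        rwa [this]
      · simp only [List.headI, List.tail, Prod.mk_add_mk]
        norm_num
  · rintro (⟨q, hq, rfl⟩ | ⟨q, ⟨hq, ⟨a, b⟩, t, rfl, hpos⟩, rfl⟩)
    · obtain ⟨hmem, hfst, hsnd, hpre⟩ := hq
      refine ⟨mem_cons_iff.mpr ⟨up_mem one_pos, hmem, by push_cast at hfst ⊢; omega,
        by push_cast at hsnd ⊢; omega, by positivity, ?_⟩, _, _, rfl, one_pos⟩
      have : (k : ℤ) + 1 = ((k + 1 : ℕ) : ℤ) := (cast_succ k).symm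
      rwa [this]
    · simp only at hpos
      obtain ⟨hh, hmem, hfst, hsnd, h0, hpre⟩ := mem_cons_iff.mp hq
      have he : a = b := by
        rcases S4_cases hh with ⟨-, e⟩ | ⟨c, -⟩ | ⟨c, -⟩ <;> simp at * <;> omega
      subst he
      simp only [List.headI, List.tail, Prod.mk_add_mk]
      refine ⟨mem_cons_iff.mpr ⟨up_mem (by omega), hmem, by push_cast at hfst ⊢; omega,
        by push_cast at hsnd ⊢; omega, by positivity, ?_⟩,
        _, _, rfl, by simp; omega⟩
      have : (k : ℤ) + (a + 1) = ((k + 1 : ℕ) : ℤ) + a := by rw [cast_succ]; ring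
      rwa [this]



/-- the down-step splitting -/
lemma SD_rec (k n : ℕ) :
    SD (k + 1) (n + 1) = ((fun p => ((1 : ℤ), (-1 : ℤ)) :: p) '' SP k n) ∪
      ((fun p => (p.headI + (1, -1)) :: p.tail) '' SD k n) := by
  ext p
  constructor
  · rintro ⟨hp, ⟨a, b⟩, t, rfl, hneg⟩
    simp only at hneg
    obtain ⟨hh, hmem, hfst, hsnd, h0, hpre⟩ := mem_cons_iff.mp hp
    have he : a = -b := by
      rcases S4_cases hh with ⟨c, -⟩ | ⟨-, e⟩ | ⟨c, -⟩ <;> simp at * <;> omega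
    subst he
    by_cases hr1 : b = -1
    · subst hr1
      left
      refine ⟨t, ⟨hmem, by push_cast at hfst ⊢; omega, by push_cast at hsnd ⊢; omega, ?_⟩, rfl⟩
      have : (k : ℤ) = ((k + 1 : ℕ) : ℤ) + (-1) := by push_cast; ring
      rw [this]
      exact hpre
    · right
      refine ⟨(-b - 1, -(-b - 1)) :: t,
        ⟨mem_cons_iff.mpr ⟨down_mem (by omega), hmem, ?_, ?_, by positivity, ?_⟩,
          ⟨_, _, rfl, by simp; omega⟩⟩, ?_⟩
      · push_cast at hfst ⊢; omega
      · push_cast at hsnd ⊢; omega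
      · have : (k : ℤ) + -(-b - 1) = ((k + 1 : ℕ) : ℤ) + b := by push_cast; ring
        rwa [this]
      · simp only [List.headI, List.tail, Prod.mk_add_mk, List.cons.injEq, Prod.mk.injEq]
        exact ⟨⟨by ring, by ring⟩, trivial⟩
  · rintro (⟨q, hq, rfl⟩ | ⟨q, ⟨hq, ⟨a, b⟩, t, rfl, hneg⟩, rfl⟩)
    · obtain ⟨hmem, hfst, hsnd, hpre⟩ := hq
      refine ⟨mem_cons_iff.mpr ⟨down_mem one_pos, hmem, by push_cast at hfst ⊢; omega,
        by push_cast at hsnd ⊢; omega, by positivity, ?_⟩, _, _, rfl, by norm_num⟩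
      have : ((k + 1 : ℕ) : ℤ) + (-1) = (k : ℤ) := by push_cast; ring
      rwa [this]
    · simp only at hneg
      obtain ⟨hh, hmem, hfst, hsnd, h0, hpre⟩ := mem_cons_iff.mp hq
      have he : a = -b := by
        rcases S4_cases hh with ⟨c, -⟩ | ⟨-, e⟩ | ⟨c, -⟩ <;> simp at * <;> omega
      subst he
      simp only [List.headI, List.tail, Prod.mk_add_mk]
      refine ⟨mem_cons_iff.mpr ⟨?_, hmem, by push_cast at hfst ⊢; omega,
        by push_cast at hsnd ⊢; omega, by positivity, ?_⟩,
        _, _, rfl, by simp; omega⟩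
      · have : ((-b + 1 : ℤ), (b + -1 : ℤ)) = ((-b + 1 : ℤ), (-(-b + 1) : ℤ)) := by
          exact Prod.ext (by ring) (by ring)
        rw [this]
        exact down_mem (by omega)
      · have : ((k + 1 : ℕ) : ℤ) + (b + -1) = (k : ℤ) + b := by push_cast; ring
        rwa [this]

/-- the flat-step splitting -/
lemma SH_rec (k n : ℕ) :
    SH k (n + 2) = ((fun p => ((2 : ℤ), (0 : ℤ)) :: p) '' SP k n) ∪
      ((fun p => (p.headI + (2, 0)) :: p.tail) '' SH k n) := by
  ext p
  constructor
  · rintro ⟨hp, ⟨a, b⟩, t, rfl, hz⟩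
    simp only at hz
    subst hz
    obtain ⟨hh, hmem, hfst, hsnd, h0, hpre⟩ := mem_cons_iff.mp hp
    obtain ⟨r, hr, he⟩ : ∃ r, 0 < r ∧ a = 2 * r := by
      rcases S4_cases hh with ⟨c, -⟩ | ⟨c, -⟩ | ⟨-, r, hr, e⟩ <;> simp at * <;> exact ⟨r, hr, e⟩
    by_cases hr1 : r = 1
    · subst hr1
      left
      refine ⟨t, ⟨hmem, by push_cast at hfst ⊢; omega, by push_cast at hsnd ⊢; omega, ?_⟩, ?_⟩
      · have : (k : ℤ) = (k : ℤ) + 0 := by ring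
        rw [this]
        exact hpre
      · norm_num at he
        subst he
        rfl
    · right
      refine ⟨(a - 2, 0) :: t,
        ⟨mem_cons_iff.mpr ⟨?_, hmem, by push_cast at hfst ⊢; omega,
          by push_cast at hsnd ⊢; omega, by positivity, ?_⟩,
          ⟨_, _, rfl, rfl⟩⟩, ?_⟩
      · have : ((a - 2 : ℤ), (0 : ℤ)) = ((2 * (r - 1) : ℤ), (0 : ℤ)) := by norm_num; omega
        rw [this]
        exact flat_mem (by omega)
      · simpa using hpre
      · simp only [List.headI, List.tail, Prod.mk_add_mk]
        norm_num
  · rintro (⟨q, hq, rfl⟩ | ⟨q, ⟨hq, ⟨a, b⟩, t, rfl, hz⟩, rfl⟩)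
    · obtain ⟨hmem, hfst, hsnd, hpre⟩ := hq
      refine ⟨mem_cons_iff.mpr ⟨?_, hmem,
        by push_cast at hfst ⊢; omega, by push_cast at hsnd ⊢; omega, by positivity, ?_⟩,
        _, _, rfl, rfl⟩
      · have : ((2 : ℤ), (0 : ℤ)) = ((2 * 1 : ℤ), (0 : ℤ)) := by norm_num
        rw [this]
        exact flat_mem one_pos
      · simpa using hpre
    · simp only at hz
      subst hz
      obtain ⟨hh, hmem, hfst, hsnd, h0, hpre⟩ := mem_cons_iff.mp hq
      obtain ⟨r, hr, he⟩ : ∃ r, 0 < r ∧ a = 2 * r := by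
        rcases S4_cases hh with ⟨c, -⟩ | ⟨c, -⟩ | ⟨-, r, hr, e⟩ <;> simp at * <;> exact ⟨r, hr, e⟩
      simp only [List.headI, List.tail, Prod.mk_add_mk]
      refine ⟨mem_cons_iff.mpr ⟨?_, hmem, by push_cast at hfst ⊢; omega,
        by push_cast at hsnd ⊢; omega, by positivity, ?_⟩,
        _, _, rfl, by norm_num⟩
      · have : ((a + 2 : ℤ), (0 + 0 : ℤ)) = ((2 * (r + 1) : ℤ), (0 : ℤ)) := by norm_num; omega
        rw [this]
        exact flat_mem (by omega)
      · simpa using hpre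


lemma card_union_images (x d : ℤ × ℤ) (B C : Set (List (ℤ × ℤ)))
    (hB : B.Finite) (hC : C.Finite)
    (hCne : ∀ p ∈ C, ∃ h t, p = h :: t ∧ x ≠ h + d) :
    (((fun p => x :: p) '' B) ∪ ((fun p => (p.headI + d) :: p.tail) '' C)).ncard =
      B.ncard + C.ncard := by
  have hinj : Function.Injective (fun p : List (ℤ × ℤ) => x :: p) :=
    fun p q h => by simpa using h
  have hinjOn : Set.InjOn (fun p => (p.headI + d) :: p.tail) C := by
    intro p hp q hq hpq
    obtain ⟨h, t, rfl, -⟩ := hCne p hp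
    obtain ⟨h', t', rfl, -⟩ := hCne q hq
    simp only [List.headI, List.tail, List.cons.injEq] at hpq
    obtain ⟨h1, rfl⟩ := hpq
    rw [add_right_cancel h1]
  have hdisj : Disjoint ((fun p => x :: p) '' B)
      ((fun p => (p.headI + d) :: p.tail) '' C) := by
    rw [Set.disjoint_left]
    rintro p ⟨q, hq, rfl⟩ ⟨q', hq', he⟩
    obtain ⟨h, t, rfl, hne⟩ := hCne q' hq'
    simp only [List.headI, List.tail] at he
    injection he with h1 h2
    exact hne h1.symm
  rw [Set.ncard_union_eq hdisj (hB.image _) (hC.image _),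
    Set.ncard_image_of_injective B hinj, Set.ncard_image_of_injOn hinjOn]

lemma SU_card (k n : ℕ) :
    (SU k (n + 1)).ncard = (SP (k + 1) n).ncard + (SU (k + 1) n).ncard := by
  rw [SU_rec]
  exact card_union_images _ _ _ _ (SP_finite _ _) (SU_finite _ _)
    (fun p hp => by
      obtain ⟨-, h, t, rfl, hpos⟩ := hp
      exact ⟨h, t, rfl, fun he => by
        have : (1 : ℤ) = h.2 + 1 := congrArg Prod.snd he
        omega⟩)

lemma SD_card (k n : ℕ) :
    (SD (k + 1) (n + 1)).ncard = (SP k n).ncard + (SD k n).ncard := by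
  rw [SD_rec]
  exact card_union_images _ _ _ _ (SP_finite _ _) (SD_finite _ _)
    (fun p hp => by
      obtain ⟨-, h, t, rfl, hneg⟩ := hp
      exact ⟨h, t, rfl, fun he => by
        have : (-1 : ℤ) = h.2 + (-1) := congrArg Prod.snd he
        omega⟩)

lemma SH_card (k n : ℕ) :
    (SH k (n + 2)).ncard = (SP k n).ncard + (SH k n).ncard := by
  rw [SH_rec]
  refine card_union_images _ _ _ _ (SP_finite _ _) (SH_finite _ _)
    (fun p hp => ?_)
  obtain ⟨⟨hmem, -, -, -⟩, h, t, rfl, hz⟩ := hp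
  refine ⟨h, t, rfl, fun he => ?_⟩
  have h2 : (2 : ℤ) = h.1 + 2 := congrArg Prod.fst he
  have := S4_fst_pos (hmem h (by simp))
  omega

lemma SP_card_partition (k : ℕ) (n : ℕ) (hn : n ≠ 0) :
    (SP k n).ncard = (SU k n).ncard + (SD k n).ncard + (SH k n).ncard := by
  rw [SP_partition k n hn,
    Set.ncard_union_eq (SUDH_disj k n) ((SU_finite k n).union (SD_finite k n)) (SH_finite k n),
    Set.ncard_union_eq (SUD_disj k n) (SU_finite k n) (SD_finite k n)]

lemma SD_height_zero (n : ℕ) : SD 0 n = ∅ := by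
  ext p
  simp only [Set.mem_empty_iff_false, iff_false]
  rintro ⟨⟨-, -, -, hpre⟩, h, t, rfl, hneg⟩
  have := hpre [h] (by simp)
  simp at this
  omega

open PowerSeries

noncomputable def Gc (k : ℕ) : PowerSeries ℚ := PowerSeries.mk fun n => ((SP k n).ncard : ℚ)
noncomputable def Uc (k : ℕ) : PowerSeries ℚ := PowerSeries.mk fun n => ((SU k n).ncard : ℚ)
noncomputable def Dc (k : ℕ) : PowerSeries ℚ := PowerSeries.mk fun n => ((SD k n).ncard : ℚ)
noncomputable def Hc (k : ℕ) : PowerSeries ℚ := PowerSeries.mk fun n => ((SH k n).ncard : ℚ)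

lemma coeff_X_mul (f : PowerSeries ℚ) (n : ℕ) :
    (coeff n) (X * f) = if n = 0 then 0 else (coeff (n - 1)) f := by
  cases n with
  | zero =>
      have : (coeff 0) (X * f) = (constantCoeff) (X * f) := by
        simp [coeff_zero_eq_constantCoeff]
      simp [this]
  | succ n => simp [coeff_succ_X_mul]

lemma coeff_X2_mul (f : PowerSeries ℚ) (n : ℕ) :
    (coeff n) (X ^ 2 * f) = if n < 2 then 0 else (coeff (n - 2)) f := by
  match n with
  | 0 => simp [pow_two, mul_assoc, coeff_X_mul]
  | 1 => simp [pow_two, mul_assoc, coeff_X_mul]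
  | (m + 2) =>
      have := coeff_X_pow_mul f 2 m
      simpa using this

lemma Gc_rel (k : ℕ) :
    Gc k = (if k = 0 then 1 else 0) + Uc k + Dc k + Hc k := by
  ext n
  simp only [map_add, Gc, Uc, Dc, Hc, coeff_mk]
  rcases Nat.eq_zero_or_pos n with rfl | hn
  · rcases Nat.eq_zero_or_pos k with rfl | hk
    · simp [SP_zero_zero, SU_zero, SD_zero, SH_zero]
    · rw [SP_zero_ne (by omega), if_neg (by omega)]
      simp [SU_zero, SD_zero, SH_zero]
  · have := SP_card_partition k n (by omega)
    have hif : (coeff n) (if k = 0 then (1 : PowerSeries ℚ) else 0) = 0 := by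
      split <;> simp [coeff_one, Nat.pos_iff_ne_zero.mp hn]
    rw [hif, this]
    push_cast
    ring

lemma Uc_rel (k : ℕ) : Uc k = X * Gc (k + 1) + X * Uc (k + 1) := by
  ext n
  simp only [map_add, Uc, Gc, coeff_mk, coeff_X_mul]
  cases n with
  | zero => simp [SU_zero]
  | succ n =>
      simp only [Nat.succ_ne_zero, if_false, Nat.add_sub_cancel, coeff_mk]
      rw [SU_card k n]
      push_cast
      ring

lemma Dc_zero : Dc 0 = 0 := by
  ext n
  simp [Dc, SD_height_zero]

lemma Dc_rel (k : ℕ) : Dc (k + 1) = X * Gc k + X * Dc k := by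
  ext n
  simp only [map_add, Dc, Gc, coeff_mk, coeff_X_mul]
  cases n with
  | zero => simp [SD_zero]
  | succ n =>
      simp only [Nat.succ_ne_zero, if_false, Nat.add_sub_cancel, coeff_mk]
      rw [SD_card k n]
      push_cast
      ring

lemma Hc_rel (k : ℕ) : Hc k = X ^ 2 * Gc k + X ^ 2 * Hc k := by
  ext n
  simp only [map_add, Hc, Gc, coeff_mk, coeff_X2_mul]
  match n with
  | 0 => simp [SH_zero]
  | 1 => simp [SH_one]
  | (m + 2) =>
      simp only [coeff_mk, if_neg (by omega : ¬ m + 2 < 2), Nat.add_sub_cancel]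
      rw [SH_card k m]
      push_cast
      ring

lemma system_unique (G1 U1 D1 H1 G2 U2 D2 H2 : ℕ → PowerSeries ℚ)
    (hG1 : ∀ k, G1 k = (if k = 0 then 1 else 0) + U1 k + D1 k + H1 k)
    (hU1 : ∀ k, U1 k = X * G1 (k + 1) + X * U1 (k + 1))
    (hD01 : D1 0 = 0) (hD1 : ∀ k, D1 (k + 1) = X * G1 k + X * D1 k)
    (hH1 : ∀ k, H1 k = X ^ 2 * G1 k + X ^ 2 * H1 k)
    (hG2 : ∀ k, G2 k = (if k = 0 then 1 else 0) + U2 k + D2 k + H2 k)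
    (hU2 : ∀ k, U2 k = X * G2 (k + 1) + X * U2 (k + 1))
    (hD02 : D2 0 = 0) (hD2 : ∀ k, D2 (k + 1) = X * G2 k + X * D2 k)
    (hH2 : ∀ k, H2 k = X ^ 2 * G2 k + X ^ 2 * H2 k) :
    ∀ k, G1 k = G2 k := by
  suffices key : ∀ n k, (coeff n) (U1 k) = (coeff n) (U2 k) ∧
      (coeff n) (D1 k) = (coeff n) (D2 k) ∧
      (coeff n) (H1 k) = (coeff n) (H2 k) ∧
      (coeff n) (G1 k) = (coeff n) (G2 k) by
    intro k
    ext n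
    exact (key n k).2.2.2
  intro n
  induction n using Nat.strong_induction_on with
  | _ n ih =>
    intro k
    have hu : (coeff n) (U1 k) = (coeff n) (U2 k) := by
      rw [hU1 k, hU2 k]
      simp only [map_add, coeff_X_mul]
      split
      · rfl
      · next hn =>
          rw [(ih (n - 1) (by omega) (k + 1)).2.2.2, (ih (n - 1) (by omega) (k + 1)).1]
    have hd : (coeff n) (D1 k) = (coeff n) (D2 k) := by
      cases k with
      | zero => rw [hD01, hD02]
      | succ k =>
          rw [hD1 k, hD2 k]
          simp only [map_add, coeff_X_mul]
          split
          · rfl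
          · next hn =>
              rw [(ih (n - 1) (by omega) k).2.2.2, (ih (n - 1) (by omega) k).2.1]
    have hh : (coeff n) (H1 k) = (coeff n) (H2 k) := by
      rw [hH1 k, hH2 k]
      simp only [map_add, coeff_X2_mul]
      split
      · rfl
      · next hn =>
          rw [(ih (n - 2) (by omega) k).2.2.2, (ih (n - 2) (by omega) k).2.2.1]
    refine ⟨hu, hd, hh, ?_⟩
    rw [hG1 k, hG2 k]
    simp only [map_add]
    rw [hu, hd, hh]



noncomputable def sq : PowerSeries ℚ →+* PowerSeries ℚ where
  toFun f := PowerSeries.mk fun n => if 2 ∣ n then (coeff (n / 2)) f else 0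
  map_zero' := by
    ext n
    simp [coeff_mk]
  map_one' := by
    ext n
    simp only [coeff_mk, coeff_one]
    rcases Nat.eq_zero_or_pos n with rfl | hn
    · simp
    · rw [if_neg (by omega : ¬n = 0)]
      by_cases h2 : 2 ∣ n
      · rw [if_pos h2, if_neg (by omega)]
      · rw [if_neg h2]
  map_add' := by
    intro a b
    ext n
    simp only [coeff_mk, map_add]
    split <;> simp
  map_mul' := by
    intro a b
    ext n
    simp only [coeff_mk, coeff_mul]
    by_cases hn : 2 ∣ n
    · obtain ⟨m, rfl⟩ := hn
      have hsub : ((Finset.HasAntidiagonal.antidiagonal m).map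
          ⟨fun x : ℕ × ℕ => (2 * x.1, 2 * x.2), by
            intro x y hxy
            simp only [Prod.mk.injEq] at hxy
            exact Prod.ext (by omega) (by omega)⟩) ⊆ Finset.HasAntidiagonal.antidiagonal (2 * m) := by
        intro x hx
        simp only [Finset.mem_map, Finset.HasAntidiagonal.mem_antidiagonal, Function.Embedding.coeFn_mk] at hx ⊢
        obtain ⟨y, hy, rfl⟩ := hx
        change 2 * y.1 + 2 * y.2 = 2 * m
        omega
      have hvan : ∀ x ∈ Finset.HasAntidiagonal.antidiagonal (2 * m),
          x ∉ ((Finset.HasAntidiagonal.antidiagonal m).map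
          ⟨fun x : ℕ × ℕ => (2 * x.1, 2 * x.2), by
            intro x y hxy
            simp only [Prod.mk.injEq] at hxy
            exact Prod.ext (by omega) (by omega)⟩) →
          ((if 2 ∣ x.1 then (coeff (x.1 / 2)) a else 0) *
            if 2 ∣ x.2 then (coeff (x.2 / 2)) b else 0) = 0 := by
        intro x hx hnx
        simp only [Finset.HasAntidiagonal.mem_antidiagonal] at hx
        simp only [Finset.mem_map, Finset.HasAntidiagonal.mem_antidiagonal, Function.Embedding.coeFn_mk,
          not_exists] at hnx
        by_cases h1 : 2 ∣ x.1
        · by_cases h2 : 2 ∣ x.2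
          · exfalso
            obtain ⟨c, hc⟩ := h1
            obtain ⟨d, hd⟩ := h2
            exact hnx (c, d) ⟨by omega, Prod.ext (by change 2 * c = x.1; omega) (by change 2 * d = x.2; omega)⟩
          · rw [if_neg h2, mul_zero]
        · rw [if_neg h1, zero_mul]
      rw [if_pos ⟨m, rfl⟩, Nat.mul_div_cancel_left m (by norm_num),
        ← Finset.sum_subset hsub hvan, Finset.sum_map]
      apply Finset.sum_congr rfl
      intro x hx
      show (coeff x.1) a * (coeff x.2) b = (if 2 ∣ 2 * x.1 then (coeff (2 * x.1 / 2)) a else 0) *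
        (if 2 ∣ 2 * x.2 then (coeff (2 * x.2 / 2)) b else 0)
      rw [if_pos ⟨x.1, by ring⟩, if_pos ⟨x.2, by ring⟩,
        Nat.mul_div_cancel_left _ (by norm_num), Nat.mul_div_cancel_left _ (by norm_num)]
    · rw [if_neg hn]
      symm
      apply Finset.sum_eq_zero
      intro x hx
      simp only [Finset.HasAntidiagonal.mem_antidiagonal] at hx
      have : ¬2 ∣ x.1 ∨ ¬2 ∣ x.2 := by omega
      rcases this with h | h
      · rw [if_neg h, zero_mul]
      · rw [if_neg h, mul_zero]

lemma coeff_sq (f : PowerSeries ℚ) (n : ℕ) :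
    (coeff n) (sq f) = if 2 ∣ n then (coeff (n / 2)) f else 0 := by
  unfold sq
  simp [coeff_mk]

lemma coeff_sq_even (f : PowerSeries ℚ) (m : ℕ) :
    (coeff (2 * m)) (sq f) = (coeff m) f := by
  rw [coeff_sq, if_pos ⟨m, rfl⟩, Nat.mul_div_cancel_left m (by norm_num)]

lemma coeff_sq_odd (f : PowerSeries ℚ) {n : ℕ} (hn : ¬2 ∣ n) :
    (coeff n) (sq f) = 0 := by
  rw [coeff_sq, if_neg hn]

lemma sq_X : sq (X : PowerSeries ℚ) = X ^ 2 := by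
  ext n
  rw [coeff_sq, coeff_X_pow]
  by_cases hn : 2 ∣ n
  · obtain ⟨m, rfl⟩ := hn
    rw [if_pos ⟨m, rfl⟩, Nat.mul_div_cancel_left m (by norm_num), coeff_X]
    by_cases h1 : m = 1
    · subst h1
      norm_num
    · rw [if_neg h1, if_neg (by omega)]
  · rw [if_neg hn, if_neg (by omega)]

lemma sq_injective : Function.Injective sq := by
  intro f g h
  ext m
  rw [← coeff_sq_even f m, ← coeff_sq_even g m, h]

lemma constantCoeff_sq (f : PowerSeries ℚ) :
    (constantCoeff) (sq f) = (constantCoeff) f := by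
  have h1 := coeff_sq_even f 0
  simpa using h1




noncomputable def NS (s : PowerSeries ℚ) : PowerSeries ℚ :=
  (1 + X - 4 * X ^ 2) - (1 - X) * s
noncomputable def mS (s : PowerSeries ℚ) : PowerSeries ℚ := (2 * (2 - 3 * X))⁻¹ * NS s
noncomputable def vS (s : PowerSeries ℚ) : PowerSeries ℚ :=
  PowerSeries.mk fun n => (coeff (n + 1)) (mS s)
noncomputable def CS : PowerSeries ℚ := (1 - X) * (2 - 3 * X)⁻¹
noncomputable def hhS : PowerSeries ℚ := X * (1 - X)⁻¹
noncomputable def PuS (s : PowerSeries ℚ) : PowerSeries ℚ :=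
  (X * vS s * (CS * (vS s - 1))) * (1 - X * vS s)⁻¹

lemma cc23 : (constantCoeff (R := ℚ)) (2 - 3 * X) = 2 := by
  simp [map_sub, constantCoeff_X, map_ofNat]

lemma cc4 : (constantCoeff (R := ℚ)) (2 * (2 - 3 * X)) = 4 := by
  simp [map_mul, map_sub, constantCoeff_X, map_ofNat]
  norm_num

lemma cc1X : (constantCoeff (R := ℚ)) (1 - X) = 1 := by
  simp [map_sub, constantCoeff_X]

lemma ne23 : (2 - 3 * X : PowerSeries ℚ) ≠ 0 := fun h => by
  have := cc23
  rw [h] at this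
  simp at this
lemma ne1X : (1 - X : PowerSeries ℚ) ≠ 0 := fun h => by
  have := cc1X
  rw [h] at this
  simp at this

lemma ccXv (s : PowerSeries ℚ) : (constantCoeff) (X * vS s) = 0 := by
  simp [map_mul, constantCoeff_X]

lemma cc1Xv (s : PowerSeries ℚ) : (constantCoeff) (1 - X * vS s) = 1 := by
  simp [map_sub, ccXv]

lemma ne1Xv (s : PowerSeries ℚ) : (1 - X * vS s : PowerSeries ℚ) ≠ 0 := fun h => by
  have := cc1Xv s
  rw [h] at this
  simp at this

lemma ccN (s : PowerSeries ℚ) (hs0 : (constantCoeff) s = 1) :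
    (constantCoeff) (NS s) = 0 := by
  simp [NS, map_sub, map_add, map_mul, map_pow, constantCoeff_X, hs0]

lemma hXv (s : PowerSeries ℚ) (hs0 : (constantCoeff) s = 1) : X * vS s = mS s := by
  ext n
  cases n with
  | zero =>
      rw [coeff_zero_eq_constantCoeff, ccXv s]
      rw [mS, map_mul, ccN s hs0, mul_zero]
  | succ n =>
      rw [coeff_succ_X_mul, vS, coeff_mk]

lemma hv (s : PowerSeries ℚ) (hs0 : (constantCoeff) s = 1) :
    2 * X * (2 - 3 * X) * vS s = (1 + X - 4 * X ^ 2) - (1 - X) * s := by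
  have h1 : 2 * X * (2 - 3 * X) * vS s = (2 * (2 - 3 * X)) * (X * vS s) := by ring
  rw [h1, hXv s hs0, mS, ← mul_assoc, PowerSeries.mul_inv_cancel _ (by rw [cc4]; norm_num),
    one_mul, NS]

lemma hK (s : PowerSeries ℚ) (hs0 : (constantCoeff) s = 1)
    (hs2 : s ^ 2 = 1 - 12 * X + 16 * X ^ 2) :
    X * (2 - 3 * X) * vS s ^ 2 - (1 + X - 4 * X ^ 2) * vS s + (2 - 3 * X) = 0 := by
  have h40 : (4 * X * (2 - 3 * X) : PowerSeries ℚ) ≠ 0 := by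
    apply mul_ne_zero (mul_ne_zero _ X_ne_zero) ne23
    intro h
    have h2 := congrArg (constantCoeff) h
    rw [map_ofNat, map_zero] at h2
    norm_num at h2
  have key : (4 * X * (2 - 3 * X)) *
      (X * (2 - 3 * X) * vS s ^ 2 - (1 + X - 4 * X ^ 2) * vS s + (2 - 3 * X)) = 0 := by
    linear_combination (2 * X * (2 - 3 * X) * vS s - (1 + X - 4 * X ^ 2) - (1 - X) * s) *
      (hv s hs0) + (1 - X) ^ 2 * hs2
  exact (mul_eq_zero.mp key).resolve_left h40

lemma hC : CS * (2 - 3 * X) = 1 - X := by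
  have h1 := PowerSeries.mul_inv_cancel ((2 : PowerSeries ℚ) - 3 * X) (by rw [cc23]; norm_num)
  calc CS * (2 - 3 * X) = (1 - X) * ((2 - 3 * X) * (2 - 3 * X)⁻¹) := by rw [CS]; ring
    _ = 1 - X := by rw [h1, mul_one]

lemma hhh : hhS * (1 - X) = X := by
  have h1 := PowerSeries.mul_inv_cancel ((1 : PowerSeries ℚ) - X) (by rw [cc1X]; norm_num)
  calc hhS * (1 - X) = X * ((1 - X) * (1 - X)⁻¹) := by rw [hhS]; ring
    _ = X := by rw [h1, mul_one]

lemma hPu (s : PowerSeries ℚ) :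
    PuS s * (1 - X * vS s) = X * vS s * (CS * (vS s - 1)) := by
  have h1 := PowerSeries.mul_inv_cancel (1 - X * vS s) (by rw [cc1Xv]; norm_num)
  calc PuS s * (1 - X * vS s)
      = (X * vS s * (CS * (vS s - 1))) * ((1 - X * vS s) * (1 - X * vS s)⁻¹) := by
        rw [PuS]; ring
    _ = X * vS s * (CS * (vS s - 1)) := by rw [h1, mul_one]

lemma hStar (s : PowerSeries ℚ) (hs0 : (constantCoeff) s = 1)
    (hs2 : s ^ 2 = 1 - 12 * X + 16 * X ^ 2) :
    CS * (vS s - 1) = PuS s + CS + hhS * (CS * (vS s - 1)) := by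
  have hne : ((1 - X * vS s) * (1 - X) : PowerSeries ℚ) ≠ 0 :=
    mul_ne_zero (ne1Xv s) ne1X
  have key : (CS * (vS s - 1) - PuS s - CS - hhS * (CS * (vS s - 1))) *
      ((1 - X * vS s) * (1 - X)) = 0 := by
    linear_combination (-(1 - X)) * hPu s + (-(CS * (vS s - 1) * (1 - X * vS s))) * hhh +
      (-CS) * hK s hs0 hs2
  have h0 := (mul_eq_zero.mp key).resolve_right hne
  linear_combination h0

lemma hC2 : CS * (2 - hhS) = 1 := by
  have key : (CS * (2 - hhS)) * (1 - X) = 1 * (1 - X) := by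
    linear_combination (-CS) * hhh + hC
  exact mul_right_cancel₀ ne1X key




section cand
variable (CC vv PP hh : PowerSeries ℚ)

lemma candG (hStarT : CC * (vv - 1) = PP + CC + hh * (CC * (vv - 1)))
    (hC2T : CC * (2 - hh) = 1) (k : ℕ) :
    CC * (vv - 1) * (X * vv) ^ k + (if k = 0 then CC else 0) =
      (if k = 0 then 1 else 0) + PP * (X * vv) ^ k +
        (if k = 0 then 0 else CC * (X * vv) ^ k) +
        hh * (CC * (vv - 1) * (X * vv) ^ k + (if k = 0 then CC else 0)) := by
  cases k with
  | zero =>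
      simp only [pow_zero, if_pos rfl, reduceIte, mul_one]
      linear_combination hStarT + hC2T
  | succ k =>
      simp only [Nat.succ_ne_zero, if_neg, reduceIte, add_zero, pow_succ]
      generalize (X * vv) ^ k = W
      linear_combination (W * X * vv) * hStarT

lemma candU (hPuT : PP * (1 - X ^ 2 * vv) = X ^ 2 * vv * (CC * (vv - 1))) (k : ℕ) :
    PP * (X * vv) ^ k =
      X * (CC * (vv - 1) * (X * vv) ^ (k + 1) + (if k + 1 = 0 then CC else 0)) +
        X * (PP * (X * vv) ^ (k + 1)) := by
  simp only [Nat.succ_ne_zero, reduceIte, add_zero, pow_succ]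
  generalize (X * vv) ^ k = W
  linear_combination W * hPuT

lemma candD (k : ℕ) :
    (if k + 1 = 0 then (0 : PowerSeries ℚ) else CC * (X * vv) ^ (k + 1)) =
      X * (CC * (vv - 1) * (X * vv) ^ k + (if k = 0 then CC else 0)) +
        X * (if k = 0 then 0 else CC * (X * vv) ^ k) := by
  cases k with
  | zero =>
      simp only [Nat.succ_ne_zero, reduceIte, pow_one, pow_zero, mul_one, mul_zero, add_zero]
      ring
  | succ k =>
      simp only [Nat.succ_ne_zero, reduceIte, add_zero, pow_succ]
      generalize (X * vv) ^ k = W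
      ring

lemma candH (hhhT : hh * (1 - X ^ 2) = X ^ 2) (G : PowerSeries ℚ) :
    hh * G = X ^ 2 * G + X ^ 2 * (hh * G) := by
  linear_combination G * hhhT

end cand

/-- series supported on even exponents -/
def EvenS (f : PowerSeries ℚ) : Prop := ∀ n : ℕ, ¬2 ∣ n → (coeff n) f = 0

lemma EvenS.add {f g : PowerSeries ℚ} (hf : EvenS f) (hg : EvenS g) : EvenS (f + g) := by
  intro n hn
  rw [map_add, hf n hn, hg n hn, add_zero]

lemma EvenS.mul {f g : PowerSeries ℚ} (hf : EvenS f) (hg : EvenS g) : EvenS (f * g) := by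
  intro n hn
  rw [coeff_mul]
  apply Finset.sum_eq_zero
  intro x hx
  simp only [Finset.HasAntidiagonal.mem_antidiagonal] at hx
  have : ¬2 ∣ x.1 ∨ ¬2 ∣ x.2 := by omega
  rcases this with h | h
  · rw [hf x.1 h, zero_mul]
  · rw [hg x.2 h, mul_zero]

lemma EvenS.sub {f g : PowerSeries ℚ} (hf : EvenS f) (hg : EvenS g) : EvenS (f - g) := by
  intro n hn
  rw [map_sub, hf n hn, hg n hn, sub_zero]

lemma EvenS.one : EvenS (1 : PowerSeries ℚ) := by
  intro n hn
  rw [coeff_one, if_neg (by omega)]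




lemma main_even (P s : PowerSeries ℚ)
    (hP : ∀ n : ℕ, PowerSeries.coeff n P =
      if n = 0 then 1
      else (Nat.card {p : List (ℤ × ℤ) // IsPath S4 n p} : ℚ))
    (hs0 : PowerSeries.constantCoeff s = 1)
    (hs2 : s ^ 2 = 1 - 12 * PowerSeries.X + 16 * PowerSeries.X ^ 2) :
    sq (2 * X * (2 - 3 * X) ^ 2 * P) =
      sq ((1 - X) * (1 + X - 4 * X ^ 2) - (1 - X) ^ 2 * s) := by
  classical
  have TPu : sq (PuS s) * (1 - X ^ 2 * sq (vS s)) =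
      X ^ 2 * sq (vS s) * (sq CS * (sq (vS s) - 1)) := by
    have h := congrArg sq (hPu s)
    simp only [map_mul, map_sub, map_one, sq_X] at h
    linear_combination h
  have TStar : sq CS * (sq (vS s) - 1) =
      sq (PuS s) + sq CS + sq hhS * (sq CS * (sq (vS s) - 1)) := by
    have h := congrArg sq (hStar s hs0 hs2)
    simp only [map_mul, map_sub, map_add, map_one, sq_X] at h
    linear_combination h
  have TC2 : sq CS * (2 - sq hhS) = 1 := by
    have h := congrArg sq hC2
    simp only [map_mul, map_sub, map_one, map_ofNat] at h
    linear_combination h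
  have Thhh : sq hhS * (1 - X ^ 2) = X ^ 2 := by
    have h := congrArg sq hhh
    simp only [map_mul, map_sub, map_one, sq_X] at h
    linear_combination h
  have TC : sq CS * (2 - 3 * X ^ 2) = 1 - X ^ 2 := by
    have h := congrArg sq hC
    simp only [map_mul, map_sub, map_one, map_ofNat, sq_X] at h
    linear_combination h
  have Tv : 2 * X ^ 2 * (2 - 3 * X ^ 2) * sq (vS s) =
      (1 + X ^ 2 - 4 * (X ^ 2) ^ 2) - (1 - X ^ 2) * sq s := by
    have h := congrArg sq (hv s hs0)
    simp only [map_mul, map_sub, map_add, map_one, map_pow, map_ofNat, sq_X] at h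
    linear_combination h
  have huniq := system_unique Gc Uc Dc Hc
      (fun k => sq CS * (sq (vS s) - 1) * (X * sq (vS s)) ^ k + (if k = 0 then sq CS else 0))
      (fun k => sq (PuS s) * (X * sq (vS s)) ^ k)
      (fun k => if k = 0 then 0 else sq CS * (X * sq (vS s)) ^ k)
      (fun k => sq hhS *
        (sq CS * (sq (vS s) - 1) * (X * sq (vS s)) ^ k + (if k = 0 then sq CS else 0)))
      Gc_rel Uc_rel Dc_zero Dc_rel Hc_rel
      (candG _ _ _ _ TStar TC2) (candU _ _ _ TPu) (by simp) (candD _ _)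
      (fun k => candH _ Thhh _)
  have hG0 : Gc 0 = sq CS * (sq (vS s) - 1) + sq CS := by
    have h := huniq 0
    simpa using h
  have hEsq : ∀ f : PowerSeries ℚ, EvenS (sq f) := fun f k hk => by rw [coeff_sq, if_neg hk]
  have hsqP : sq P = Gc 0 := by
    ext n
    rw [coeff_sq]
    by_cases hn : 2 ∣ n
    · obtain ⟨m, rfl⟩ := hn
      rw [if_pos ⟨m, rfl⟩, Nat.mul_div_cancel_left m (by norm_num), hP m]
      simp only [Gc, coeff_mk]
      rcases Nat.eq_zero_or_pos m with rfl | hm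
      · rw [if_pos rfl]
        norm_num [SP_zero_zero]
      · rw [if_neg (by omega)]
        have hset : {p : List (ℤ × ℤ) | IsPath S4 m p} = SP 0 (2 * m) := by
          ext p
          simp only [Set.mem_setOf_eq, IsPath, SP, Pre]
          constructor
          · rintro ⟨h1, h2, h3, h4⟩
            refine ⟨h1, by push_cast; omega, by simpa using h3, fun q hq => ?_⟩
            simpa using h4 q hq
          · rintro ⟨h1, h2, h3, h4⟩
            refine ⟨h1, by push_cast at h2 ⊢; omega, by simpa using h3, fun q hq => ?_⟩
            simpa using h4 q hq
        have hcard : Nat.card {p : List (ℤ × ℤ) // IsPath S4 m p} = (SP 0 (2 * m)).ncard := by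
          rw [← hset]
          exact Nat.card_coe_set_eq _
        rw [hcard]
    · rw [if_neg hn]
      have hEven : EvenS (Gc 0) := by
        rw [hG0]
        exact ((hEsq CS).mul ((hEsq (vS s)).sub EvenS.one)).add (hEsq CS)
      exact (hEven n hn).symm
  have hconst : sq (2 * X * (2 - 3 * X) ^ 2) = 2 * X ^ 2 * (2 - 3 * X ^ 2) ^ 2 := by
    simp only [map_mul, map_pow, map_sub, map_ofNat, sq_X]
  have hL : sq (2 * X * (2 - 3 * X) ^ 2 * P) =
      2 * X ^ 2 * (2 - 3 * X ^ 2) ^ 2 * (sq CS * (sq (vS s) - 1) + sq CS) := by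
    rw [map_mul, hconst, hsqP, hG0]
  have hR : sq ((1 - X) * (1 + X - 4 * X ^ 2) - (1 - X) ^ 2 * s) =
      (1 - X ^ 2) * (1 + X ^ 2 - 4 * (X ^ 2) ^ 2) - (1 - X ^ 2) ^ 2 * sq s := by
    simp only [map_mul, map_sub, map_add, map_pow, map_one, map_ofNat, sq_X]
  rw [hL, hR]
  linear_combination ((2 - 3 * X ^ 2) * sq CS) * Tv +
    ((1 + X ^ 2 - 4 * (X ^ 2) ^ 2) - (1 - X ^ 2) * sq s) * TC

end GFS4


theorem gf_L_S4 (P s : PowerSeries ℚ)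
    (hP : ∀ n : ℕ, PowerSeries.coeff n P =
      if n = 0 then 1
      else (Nat.card {p : List (ℤ × ℤ) // IsPath S4 n p} : ℚ))
    (hs0 : PowerSeries.constantCoeff s = 1)
    (hs2 : s ^ 2 = 1 - 12 * PowerSeries.X + 16 * PowerSeries.X ^ 2) :
    2 * PowerSeries.X * (2 - 3 * PowerSeries.X) ^ 2 * P = (1 - PowerSeries.X) * (1 + PowerSeries.X - 4 * PowerSeries.X ^ 2) - (1 - PowerSeries.X) ^ 2 * s :=
  GFS4.sq_injective (GFS4.main_even P s hP hs0 hs2)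
end
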